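/- arXiv:0908.2056 — 3 statements merged into one kernel-verified Lean document; each statement's English description precedes it below -/
import Mathlib

section
/- In the Kesten-Stigum phase bλ² > 1, the second moments of S_n are uniformly bounded: there exists a constant C = C(M) < ∞ such that max_i E[S_n² | ξ_ρ = i] ≤ C for all n ≥ 0. -/
open Finset

section KSaux
variable {b k : ℕ}

def KSCfg (b k n : ℕ) : Type := ∀ m : Fin (n+1), (Fin (m : ℕ) → Fin b) → Fin k

noncomputable instance (b k n : ℕ) : Fintype (KSCfg b k n) :=
  inferInstanceAs (Fintype (∀ m : Fin (n+1), (Fin (m : ℕ) → Fin b) → Fin k))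

def KSroot {n : ℕ} (c : KSCfg b k n) : Fin k := c ⟨0, n.succ_pos⟩ Fin.elim0

def KSemb {n : ℕ} (c : KSCfg b k n) : (m : ℕ) → (Fin m → Fin b) → Fin k :=
  fun m => if h : m < n + 1 then fun x => c ⟨m, h⟩ x else fun _ => KSroot c

lemma KSemb_lt {n : ℕ} (c : KSCfg b k n) {m : ℕ} (h : m < n+1) (x : Fin m → Fin b) :
    KSemb c m x = c ⟨m, h⟩ x := by simp [KSemb, h]

lemma KSemb_zero {n : ℕ} (c : KSCfg b k n) (x : Fin 0 → Fin b) :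
    KSemb c 0 x = KSroot c := by
  rw [KSemb_lt c n.succ_pos]
  unfold KSroot
  congr 1
  funext i; exact i.elim0

def KSsub {n : ℕ} (a : Fin b) (c : KSCfg b k (n+1)) : KSCfg b k n :=
  fun m y => c ⟨(m : ℕ)+1, by omega⟩ (Fin.cons a y)

def KSglue {n : ℕ} (j : Fin k) (g : Fin b → KSCfg b k n) : KSCfg b k (n+1) :=
  fun m => Fin.cases (motive := fun m : Fin (n+2) => (Fin (m : ℕ) → Fin b) → Fin k)
    (fun _ => j) (fun m' x => g (x ⟨0, Nat.succ_pos _⟩) m' (Fin.tail x)) m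

lemma KSglue_zero {n : ℕ} (j : Fin k) (g : Fin b → KSCfg b k n) (h : 0 < n+2)
    (x : Fin ((⟨0,h⟩ : Fin (n+2)) : ℕ) → Fin b) :
    KSglue j g ⟨0, h⟩ x = j := rfl

lemma KSglue_succ {n : ℕ} (j : Fin k) (g : Fin b → KSCfg b k n) (m : Fin (n+1))
    (h : (m : ℕ)+1 < n+2) (x : Fin ((m : ℕ)+1) → Fin b) :
    KSglue j g ⟨(m : ℕ)+1, h⟩ x = g (x 0) m (Fin.tail x) := rfl

lemma KSroot_glue {n : ℕ} (j : Fin k) (g : Fin b → KSCfg b k n) :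
    KSroot (KSglue j g) = j := rfl

lemma KSsub_glue {n : ℕ} (j : Fin k) (g : Fin b → KSCfg b k n) (a : Fin b) :
    KSsub a (KSglue j g) = g a := by
  funext m y
  show KSglue j g ⟨(m : ℕ)+1, by omega⟩ (Fin.cons a y) = g a m y
  rw [KSglue_succ]
  simp [Fin.tail_cons, Fin.cons_zero]

lemma KSglue_eta {n : ℕ} (c : KSCfg b k (n+1)) :
    KSglue (KSroot c) (fun a => KSsub a c) = c := by
  funext m x
  match m with
  | ⟨0, h⟩ =>
    rw [KSglue_zero]
    unfold KSroot
    congr 1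
    funext i; exact i.elim0
  | ⟨mm+1, h⟩ =>
    show c ⟨mm+1, by omega⟩ (Fin.cons (x 0) (Fin.tail x)) = c ⟨mm+1, h⟩ x
    rw [Fin.cons_self_tail]

noncomputable def KSequiv (b k n : ℕ) : Fin k × (Fin b → KSCfg b k n) ≃ KSCfg b k (n+1) where
  toFun p := KSglue p.1 p.2
  invFun c := (KSroot c, fun a => KSsub a c)
  left_inv p := Prod.ext (KSroot_glue p.1 p.2) (funext fun a => KSsub_glue p.1 p.2 a)
  right_inv c := KSglue_eta c

end KSaux
section KSaux2
variable {b k : ℕ}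

def KSwt (M : Matrix (Fin k) (Fin k) ℝ) (n : ℕ) (f : (m : ℕ) → (Fin m → Fin b) → Fin k) : ℝ :=
  ∏ m ∈ Finset.range n, ∏ x : Fin (m + 1) → Fin b,
    M (f m (x ∘ Fin.castSucc)) (f (m + 1) x)

def KSsval (ν : Fin k → ℝ) (n : ℕ) (f : (m : ℕ) → (Fin m → Fin b) → Fin k) : ℝ :=
  ∑ x : Fin n → Fin b, ν (f n x)

lemma KSwt_zero (M : Matrix (Fin k) (Fin k) ℝ) (f : (m : ℕ) → (Fin m → Fin b) → Fin k) :
    KSwt M 0 f = 1 := by simp [KSwt]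

lemma KSwt_nonneg (M : Matrix (Fin k) (Fin k) ℝ) (hM0 : ∀ i j, 0 ≤ M i j) (n : ℕ)
    (f : (m : ℕ) → (Fin m → Fin b) → Fin k) : 0 ≤ KSwt M n f :=
  Finset.prod_nonneg fun _ _ => Finset.prod_nonneg fun _ _ => hM0 _ _

lemma KSsval_zero (ν : Fin k → ℝ) {n : ℕ} (c : KSCfg b k n) :
    KSsval ν 0 (KSemb c) = ν (KSroot c) := by
  unfold KSsval
  have : ∀ x : Fin 0 → Fin b, ν (KSemb c 0 x) = ν (KSroot c) := fun x => by
    rw [KSemb_zero]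
  rw [Finset.sum_congr rfl fun x _ => this x]
  simp

-- evaluation of emb ∘ glue
lemma KSembglue_zero {n : ℕ} (j : Fin k) (g : Fin b → KSCfg b k n) (x : Fin 0 → Fin b) :
    KSemb (KSglue j g) 0 x = j := by
  rw [KSemb_lt (KSglue j g) (Nat.succ_pos (n+1)) x]
  exact KSglue_zero j g _ x

lemma KSembglue_succ {n : ℕ} (j : Fin k) (g : Fin b → KSCfg b k n) {m : ℕ} (h : m < n + 1)
    (x : Fin (m+1) → Fin b) :
    KSemb (KSglue j g) (m+1) x = KSemb (g (x 0)) m (Fin.tail x) := by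
  rw [KSemb_lt (KSglue j g) (by omega : m+1 < n+2) x]
  rw [show KSglue j g ⟨m+1, by omega⟩ x
      = g (x 0) ⟨m, h⟩ (Fin.tail x) from rfl]
  rw [KSemb_lt (g (x 0)) h]

lemma KS_tail_comp {m : ℕ} (x : Fin (m+2) → Fin b) :
    Fin.tail (x ∘ Fin.castSucc) = (Fin.tail x) ∘ Fin.castSucc := by
  funext i
  rfl

lemma KS_comp_zero {m : ℕ} (x : Fin (m+2) → Fin b) :
    (x ∘ Fin.castSucc) 0 = x 0 := by
  simp [Function.comp]

lemma KSwt_glue (M : Matrix (Fin k) (Fin k) ℝ) {n : ℕ} (j : Fin k) (g : Fin b → KSCfg b k n) :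
    KSwt M (n+1) (KSemb (KSglue j g))
      = ∏ a : Fin b, (M j (KSroot (g a)) * KSwt M n (KSemb (g a))) := by
  unfold KSwt
  rw [Finset.prod_range_succ']
  have h0 : (∏ x : Fin 1 → Fin b,
      M (KSemb (KSglue j g) 0 (x ∘ Fin.castSucc)) (KSemb (KSglue j g) 1 x))
      = ∏ a : Fin b, M j (KSroot (g a)) := by
    rw [← (Equiv.funUnique (Fin 1) (Fin b)).symm.prod_comp]
    refine Finset.prod_congr rfl fun a _ => ?_
    have hx : ((Equiv.funUnique (Fin 1) (Fin b)).symm a) = fun _ => a := rfl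
    rw [hx, KSembglue_zero]
    rw [show KSemb (KSglue j g) 1 (fun _ => a) = KSemb (g a) 0 (Fin.tail (fun _ : Fin 1 => a))
        from KSembglue_succ j g (Nat.succ_pos n) (fun _ => a)]
    rw [KSemb_zero]
  have h1 : ∀ m ∈ Finset.range n,
      (∏ x : Fin (m+1+1) → Fin b,
        M (KSemb (KSglue j g) (m+1) (x ∘ Fin.castSucc)) (KSemb (KSglue j g) (m+1+1) x))
      = ∏ a : Fin b, ∏ y : Fin (m+1) → Fin b,
          M (KSemb (g a) m (y ∘ Fin.castSucc)) (KSemb (g a) (m+1) y) := by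
    intro m hm
    rw [Finset.mem_range] at hm
    rw [← (Fin.consEquiv (fun _ : Fin (m+2) => Fin b)).prod_comp]
    rw [Fintype.prod_prod_type]
    refine Finset.prod_congr rfl fun a _ => Finset.prod_congr rfl fun y _ => ?_
    have hc : (Fin.consEquiv (fun _ : Fin (m+2) => Fin b)) (a, y) = Fin.cons a y := rfl
    rw [hc]
    rw [show (Fin.cons a y : Fin (m+2) → Fin b) ∘ Fin.castSucc = Fin.cons a (y ∘ Fin.castSucc) by
      funext i
      induction i using Fin.cases with
      | zero => simp
      | succ i' =>
        simp only [Function.comp_apply]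
        rw [← Fin.succ_castSucc, Fin.cons_succ, Fin.cons_succ]
        rfl]
    rw [KSembglue_succ j g (by omega) (Fin.cons a (y ∘ Fin.castSucc))]
    rw [KSembglue_succ j g (by omega) (Fin.cons a y)]
    simp [Fin.cons_zero, Fin.tail_cons]
  rw [Finset.prod_congr rfl h1, h0, Finset.prod_comm, ← Finset.prod_mul_distrib]
  exact Finset.prod_congr rfl fun a _ => mul_comm _ _
end KSaux2
section KSaux3
variable {b k : ℕ}

lemma KSsval_glue (ν : Fin k → ℝ) {n : ℕ} (j : Fin k) (g : Fin b → KSCfg b k n) :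
    KSsval ν (n+1) (KSemb (KSglue j g)) = ∑ a : Fin b, KSsval ν n (KSemb (g a)) := by
  unfold KSsval
  rw [← (Fin.consEquiv (fun _ : Fin (n+1) => Fin b)).sum_comp]
  rw [Fintype.sum_prod_type]
  refine Finset.sum_congr rfl fun a _ => Finset.sum_congr rfl fun y _ => ?_
  have hc : (Fin.consEquiv (fun _ : Fin (n+1) => Fin b)) (a, y) = Fin.cons a y := rfl
  rw [hc, KSembglue_succ j g (Nat.lt_succ_self n) (Fin.cons a y)]
  simp [Fin.cons_zero, Fin.tail_cons]

def KSe0 (b k : ℕ) : Fin k ≃ KSCfg b k 0 where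
  toFun i := fun _ _ => i
  invFun c := KSroot c
  left_inv i := rfl
  right_inv c := by
    funext m x
    match m with
    | ⟨0, h⟩ =>
      show KSroot c = c ⟨0, h⟩ x
      unfold KSroot
      congr 1
      funext i; exact i.elim0

lemma KSsum_root {n : ℕ} (v : Fin k → ℝ) (F : KSCfg b k n → ℝ) :
    ∑ c : KSCfg b k n, v (KSroot c) * F c
      = ∑ j : Fin k, v j * ∑ c : KSCfg b k n, (if KSroot c = j then F c else 0) := by
  have : ∀ j : Fin k, v j * ∑ c : KSCfg b k n, (if KSroot c = j then F c else 0)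
      = ∑ c : KSCfg b k n, (if KSroot c = j then v j * F c else 0) := by
    intro j
    rw [Finset.mul_sum]
    exact Finset.sum_congr rfl fun c _ => by split <;> simp
  rw [Finset.sum_congr rfl fun j _ => this j, Finset.sum_comm]
  refine Finset.sum_congr rfl fun c _ => ?_
  have : ∀ j, (if KSroot c = j then v j * F c else 0)
      = (if j = KSroot c then v j * F c else 0) := by
    intro j; by_cases h : j = KSroot c <;> simp [h, eq_comm]
  rw [Finset.sum_congr rfl fun j _ => this j, Finset.sum_ite_eq' Finset.univ (KSroot c)]
  simp

lemma KSmaster1 {ι γ : Type*} [Fintype ι] [DecidableEq ι] [Fintype γ] (w s : γ → ℝ) (a : ι) :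
    ∑ g : ι → γ, (∏ i, w (g i)) * s (g a)
      = ∏ i, ∑ h, (w h * (if i = a then s h else 1)) := by
  rw [Fintype.prod_sum]
  refine Finset.sum_congr rfl fun g _ => ?_
  rw [Finset.prod_mul_distrib, Finset.prod_ite_eq']
  simp

lemma KSmaster2 {ι γ : Type*} [Fintype ι] [DecidableEq ι] [Fintype γ] (w s : γ → ℝ) (a a' : ι) :
    ∑ g : ι → γ, (∏ i, w (g i)) * (s (g a) * s (g a'))
      = ∏ i, ∑ h, (w h * ((if i = a then s h else 1) * (if i = a' then s h else 1))) := by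
  rw [Fintype.prod_sum]
  refine Finset.sum_congr rfl fun g _ => ?_
  have : ∀ i h, w h * ((if i = a then s h else 1) * (if i = a' then s h else 1))
      = w h * (if i = a then s h else 1) * (if i = a' then s h else 1) := by
    intro i h; ring
  rw [Finset.prod_congr rfl fun i _ => this i (g i)]
  rw [Finset.prod_mul_distrib, Finset.prod_mul_distrib, Finset.prod_ite_eq', Finset.prod_ite_eq']
  simp [mul_assoc]

end KSaux3
section KSaux4
variable {b k : ℕ}

noncomputable def KSA (M : Matrix (Fin k) (Fin k) ℝ) (b : ℕ) (n : ℕ) (j : Fin k) : ℝ :=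
  ∑ c : KSCfg b k n, if KSroot c = j then KSwt M n (KSemb c) else 0

noncomputable def KSY (M : Matrix (Fin k) (Fin k) ℝ) (ν : Fin k → ℝ) (b : ℕ) (n : ℕ) (j : Fin k) : ℝ :=
  ∑ c : KSCfg b k n, if KSroot c = j then KSwt M n (KSemb c) * KSsval ν n (KSemb c) else 0

noncomputable def KSZ (M : Matrix (Fin k) (Fin k) ℝ) (ν : Fin k → ℝ) (b : ℕ) (n : ℕ) (j : Fin k) : ℝ :=
  ∑ c : KSCfg b k n, if KSroot c = j then KSwt M n (KSemb c) * KSsval ν n (KSemb c) ^ 2 else 0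

lemma KSsum_glue {n : ℕ} (F : KSCfg b k (n+1) → ℝ) :
    ∑ c : KSCfg b k (n+1), F c
      = ∑ j : Fin k, ∑ g : Fin b → KSCfg b k n, F (KSglue j g) := by
  rw [← (KSequiv b k n).sum_comp, Fintype.sum_prod_type]
  rfl

lemma KSsum_base (F : KSCfg b k 0 → ℝ) :
    ∑ c : KSCfg b k 0, F c = ∑ i : Fin k, F ((KSe0 b k) i) := by
  rw [← (KSe0 b k).sum_comp]

lemma KSite_sum {α : Type*} [Fintype α] (P : Prop) [Decidable P] (X : α → ℝ) :
    (∑ g : α, if P then X g else 0) = if P then ∑ g : α, X g else 0 := by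
  split <;> simp

lemma KScollapse {n : ℕ} (i : Fin k) (X : Fin k → (Fin b → KSCfg b k n) → ℝ) :
    (∑ j : Fin k, ∑ g : Fin b → KSCfg b k n, if j = i then X j g else 0)
      = ∑ g : Fin b → KSCfg b k n, X i g := by
  rw [Finset.sum_congr rfl fun j _ => KSite_sum (j = i) (X j),
    Finset.sum_ite_eq' Finset.univ i]
  simp

lemma KSA_one (M : Matrix (Fin k) (Fin k) ℝ) (hM1 : ∀ i, ∑ j, M i j = 1) :
    ∀ n (j : Fin k), KSA M b n j = 1 := by
  intro n
  induction n with
  | zero =>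
    intro j
    unfold KSA
    rw [KSsum_base]
    have : ∀ i : Fin k, (if KSroot ((KSe0 b k) i) = j then KSwt M 0 (KSemb ((KSe0 b k) i)) else 0)
        = if i = j then 1 else 0 := by
      intro i
      rw [KSwt_zero]
      rfl
    rw [Finset.sum_congr rfl fun i _ => this i, Finset.sum_ite_eq' Finset.univ j]
    simp
  | succ n ih =>
    intro i
    unfold KSA
    rw [KSsum_glue]
    have h1 : ∀ (j : Fin k) (g : Fin b → KSCfg b k n),
        (if KSroot (KSglue j g) = i then KSwt M (n+1) (KSemb (KSglue j g)) else 0)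
        = if j = i then ∏ a : Fin b, (M j (KSroot (g a)) * KSwt M n (KSemb (g a))) else 0 := by
      intro j g
      rw [KSroot_glue, KSwt_glue]
    rw [Finset.sum_congr rfl fun j _ => Finset.sum_congr rfl fun g _ => h1 j g, KScollapse]
    rw [← Fintype.prod_sum (fun (_ : Fin b) (h : KSCfg b k n) => M i (KSroot h) * KSwt M n (KSemb h))]
    have h2 : (∑ h : KSCfg b k n, M i (KSroot h) * KSwt M n (KSemb h)) = 1 := by
      rw [KSsum_root (fun j => M i j) (fun h => KSwt M n (KSemb h))]
      have : ∀ j : Fin k, M i j * KSA M b n j = M i j := fun j => by rw [ih j, mul_one]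
      calc ∑ j : Fin k, M i j * ∑ c : KSCfg b k n, (if KSroot c = j then KSwt M n (KSemb c) else 0)
          = ∑ j : Fin k, M i j * KSA M b n j := rfl
        _ = ∑ j : Fin k, M i j := Finset.sum_congr rfl fun j _ => this j
        _ = 1 := hM1 i
    rw [Finset.prod_congr rfl fun a _ => h2]
    simp

end KSaux4
section KSaux5
variable {b k : ℕ}

lemma KSw_one (M : Matrix (Fin k) (Fin k) ℝ) (hM1 : ∀ i, ∑ j, M i j = 1) (n : ℕ) (i : Fin k) :
    (∑ h : KSCfg b k n, M i (KSroot h) * KSwt M n (KSemb h)) = 1 := by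
  rw [KSsum_root (fun j => M i j) (fun h => KSwt M n (KSemb h))]
  calc ∑ j : Fin k, M i j * ∑ c : KSCfg b k n, (if KSroot c = j then KSwt M n (KSemb c) else 0)
      = ∑ j : Fin k, M i j * KSA M b n j := rfl
    _ = ∑ j : Fin k, M i j := Finset.sum_congr rfl fun j _ => by rw [KSA_one M hM1 n j, mul_one]
    _ = 1 := hM1 i

lemma KSY_eq (M : Matrix (Fin k) (Fin k) ℝ) (ν : Fin k → ℝ) (lam : ℝ)
    (hM1 : ∀ i, ∑ j, M i j = 1) (hMv : ∀ i, (∑ j, M i j * ν j) = lam * ν i) :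
    ∀ n (j : Fin k), KSY M ν b n j = ((b : ℝ) * lam) ^ n * ν j := by
  intro n
  induction n with
  | zero =>
    intro j
    unfold KSY
    rw [KSsum_base]
    have : ∀ i : Fin k,
        (if KSroot ((KSe0 b k) i) = j then KSwt M 0 (KSemb ((KSe0 b k) i)) * KSsval ν 0 (KSemb ((KSe0 b k) i)) else 0)
        = if i = j then ν i else 0 := by
      intro i
      rw [KSwt_zero, KSsval_zero, one_mul]
      rfl
    rw [Finset.sum_congr rfl fun i _ => this i, Finset.sum_ite_eq' Finset.univ j]
    simp
  | succ n ih =>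
    intro i
    unfold KSY
    rw [KSsum_glue]
    have h1 : ∀ (j : Fin k) (g : Fin b → KSCfg b k n),
        (if KSroot (KSglue j g) = i then KSwt M (n+1) (KSemb (KSglue j g)) * KSsval ν (n+1) (KSemb (KSglue j g)) else 0)
        = if j = i then (∏ a : Fin b, (M j (KSroot (g a)) * KSwt M n (KSemb (g a)))) * ∑ a : Fin b, KSsval ν n (KSemb (g a)) else 0 := by
      intro j g
      rw [KSroot_glue, KSwt_glue, KSsval_glue]
    rw [Finset.sum_congr rfl fun j _ => Finset.sum_congr rfl fun g _ => h1 j g, KScollapse]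
    have h2 : ∀ g : Fin b → KSCfg b k n,
        (∏ a : Fin b, (M i (KSroot (g a)) * KSwt M n (KSemb (g a)))) * ∑ a : Fin b, KSsval ν n (KSemb (g a))
        = ∑ a : Fin b, (∏ a' : Fin b, (M i (KSroot (g a')) * KSwt M n (KSemb (g a')))) * KSsval ν n (KSemb (g a)) :=
      fun g => Finset.mul_sum _ _ _
    rw [Finset.sum_congr rfl fun g _ => h2 g, Finset.sum_comm]
    have h3 : ∀ a : Fin b,
        (∑ g : Fin b → KSCfg b k n, (∏ a' : Fin b, (M i (KSroot (g a')) * KSwt M n (KSemb (g a')))) * KSsval ν n (KSemb (g a)))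
        = ((b : ℝ) * lam) ^ n * (lam * ν i) := by
      intro a
      rw [KSmaster1 (fun h => M i (KSroot h) * KSwt M n (KSemb h)) (fun h => KSsval ν n (KSemb h)) a]
      have hf : ∀ a' : Fin b,
          (∑ h : KSCfg b k n, (M i (KSroot h) * KSwt M n (KSemb h)) * (if a' = a then KSsval ν n (KSemb h) else 1))
          = if a' = a then ((b : ℝ) * lam) ^ n * (lam * ν i) else 1 := by
        intro a'
        by_cases ha : a' = a
        · simp only [ha, if_pos]
          have : ∀ h : KSCfg b k n, (M i (KSroot h) * KSwt M n (KSemb h)) * KSsval ν n (KSemb h)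
              = M i (KSroot h) * (KSwt M n (KSemb h) * KSsval ν n (KSemb h)) := fun h => by ring
          rw [Finset.sum_congr rfl fun h _ => this h,
            KSsum_root (fun j => M i j) (fun h => KSwt M n (KSemb h) * KSsval ν n (KSemb h))]
          calc ∑ j : Fin k, M i j * ∑ c : KSCfg b k n,
                (if KSroot c = j then KSwt M n (KSemb c) * KSsval ν n (KSemb c) else 0)
              = ∑ j : Fin k, M i j * KSY M ν b n j := rfl
            _ = ∑ j : Fin k, ((b : ℝ) * lam) ^ n * (M i j * ν j) :=
                Finset.sum_congr rfl fun j _ => by rw [ih j]; ring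
            _ = ((b : ℝ) * lam) ^ n * ∑ j : Fin k, M i j * ν j := by rw [← Finset.mul_sum]
            _ = ((b : ℝ) * lam) ^ n * (lam * ν i) := by rw [hMv i]
        · simp only [ha, if_neg, not_false_iff, mul_one]
          exact KSw_one M hM1 n i
      rw [Finset.prod_congr rfl fun a' _ => hf a', Finset.prod_ite_eq' Finset.univ a]
      simp
    rw [Finset.sum_congr rfl fun a _ => h3 a, Finset.sum_const]
    simp only [Finset.card_univ, Fintype.card_fin, nsmul_eq_mul]
    ring

end KSaux5
section KSaux6
variable {b k : ℕ}

lemma KSZ_succ (M : Matrix (Fin k) (Fin k) ℝ) (ν : Fin k → ℝ) (lam : ℝ)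
    (hM1 : ∀ i, ∑ j, M i j = 1) (hMv : ∀ i, (∑ j, M i j * ν j) = lam * ν i)
    (n : ℕ) (i : Fin k) :
    KSZ M ν b (n+1) i
      = (b : ℝ) * (∑ j, M i j * KSZ M ν b n j)
        + ((b : ℝ) ^ 2 - (b : ℝ)) * (((b : ℝ) * lam) ^ n * (lam * ν i)) ^ 2 := by
  set w : KSCfg b k n → ℝ := fun h => M i (KSroot h) * KSwt M n (KSemb h) with hw
  set s : KSCfg b k n → ℝ := fun h => KSsval ν n (KSemb h) with hsdef
  set Z1 : ℝ := ∑ j, M i j * KSZ M ν b n j with hZ1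
  set Y1 : ℝ := ((b : ℝ) * lam) ^ n * (lam * ν i) with hY1
  have hws : (∑ h : KSCfg b k n, w h * s h) = Y1 := by
    have : ∀ h : KSCfg b k n, w h * s h
        = M i (KSroot h) * (KSwt M n (KSemb h) * KSsval ν n (KSemb h)) := fun h => by
      simp only [hw, hsdef]; ring
    rw [Finset.sum_congr rfl fun h _ => this h,
      KSsum_root (fun j => M i j) (fun h => KSwt M n (KSemb h) * KSsval ν n (KSemb h))]
    calc ∑ j : Fin k, M i j * ∑ c : KSCfg b k n,
          (if KSroot c = j then KSwt M n (KSemb c) * KSsval ν n (KSemb c) else 0)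
        = ∑ j : Fin k, M i j * KSY M ν b n j := rfl
      _ = ∑ j : Fin k, ((b : ℝ) * lam) ^ n * (M i j * ν j) :=
          Finset.sum_congr rfl fun j _ => by rw [KSY_eq M ν lam hM1 hMv n j]; ring
      _ = ((b : ℝ) * lam) ^ n * ∑ j : Fin k, M i j * ν j := by rw [← Finset.mul_sum]
      _ = Y1 := by rw [hMv i]
  have hwss : (∑ h : KSCfg b k n, w h * (s h * s h)) = Z1 := by
    have : ∀ h : KSCfg b k n, w h * (s h * s h)
        = M i (KSroot h) * (KSwt M n (KSemb h) * KSsval ν n (KSemb h) ^ 2) := fun h => by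
      simp only [hw, hsdef]; ring
    rw [Finset.sum_congr rfl fun h _ => this h,
      KSsum_root (fun j => M i j) (fun h => KSwt M n (KSemb h) * KSsval ν n (KSemb h) ^ 2)]
    rfl
  have hw1 : (∑ h : KSCfg b k n, w h) = 1 := KSw_one M hM1 n i
  unfold KSZ
  rw [KSsum_glue]
  have h1 : ∀ (j : Fin k) (g : Fin b → KSCfg b k n),
      (if KSroot (KSglue j g) = i then KSwt M (n+1) (KSemb (KSglue j g)) * KSsval ν (n+1) (KSemb (KSglue j g)) ^ 2 else 0)
      = if j = i then (∏ a : Fin b, (M j (KSroot (g a)) * KSwt M n (KSemb (g a)))) * (∑ a : Fin b, s (g a)) ^ 2 else 0 := by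
    intro j g
    rw [KSroot_glue, KSwt_glue, KSsval_glue]
  rw [Finset.sum_congr rfl fun j _ => Finset.sum_congr rfl fun g _ => h1 j g, KScollapse]
  have h2 : ∀ g : Fin b → KSCfg b k n,
      (∏ a : Fin b, (M i (KSroot (g a)) * KSwt M n (KSemb (g a)))) * (∑ a : Fin b, s (g a)) ^ 2
      = ∑ a : Fin b, ∑ a' : Fin b, (∏ a'' : Fin b, w (g a'')) * (s (g a) * s (g a')) := by
    intro g
    rw [sq, Finset.sum_mul_sum, Finset.mul_sum]
    exact Finset.sum_congr rfl fun a _ => by rw [Finset.mul_sum]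
  rw [Finset.sum_congr rfl fun g _ => h2 g, Finset.sum_comm]
  have h2b : ∀ a : Fin b,
      (∑ g : Fin b → KSCfg b k n, ∑ a' : Fin b, (∏ a'' : Fin b, w (g a'')) * (s (g a) * s (g a')))
      = ∑ a' : Fin b, ∑ g : Fin b → KSCfg b k n, (∏ a'' : Fin b, w (g a'')) * (s (g a) * s (g a')) :=
    fun a => Finset.sum_comm
  rw [Finset.sum_congr rfl fun a _ => h2b a]
  have h3 : ∀ a a' : Fin b,
      (∑ g : Fin b → KSCfg b k n, (∏ a'' : Fin b, w (g a'')) * (s (g a) * s (g a')))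
      = if a = a' then Z1 else Y1 * Y1 := by
    intro a a'
    rw [KSmaster2 w s a a']
    by_cases haa : a = a'
    · subst haa
      have hf : ∀ a'' : Fin b,
          (∑ h : KSCfg b k n, w h * ((if a'' = a then s h else 1) * (if a'' = a then s h else 1)))
          = if a'' = a then Z1 else 1 := by
        intro a''
        by_cases h : a'' = a
        · simp only [h, if_pos]
          exact hwss
        · simp only [h, if_neg, not_false_iff, mul_one]
          exact hw1
      rw [Finset.prod_congr rfl fun a'' _ => hf a'', Finset.prod_ite_eq' Finset.univ a]
      simp
    · have hf : ∀ a'' : Fin b,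
          (∑ h : KSCfg b k n, w h * ((if a'' = a then s h else 1) * (if a'' = a' then s h else 1)))
          = (if a'' = a then Y1 else 1) * (if a'' = a' then Y1 else 1) := by
        intro a''
        by_cases h : a'' = a
        · have h' : ¬ (a'' = a') := by rw [h]; exact haa
          simp only [if_pos h, if_neg h', mul_one]
          exact hws
        · by_cases h' : a'' = a'
          · simp only [if_pos h', if_neg h, one_mul]
            exact hws
          · simp only [if_neg h, if_neg h', mul_one]
            exact hw1
      rw [Finset.prod_congr rfl fun a'' _ => hf a'', Finset.prod_mul_distrib,
        Finset.prod_ite_eq' Finset.univ a, Finset.prod_ite_eq' Finset.univ a']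
      simp [haa]
  rw [Finset.sum_congr rfl fun a _ => Finset.sum_congr rfl fun a' _ => h3 a a']
  have h4 : ∀ a a' : Fin b, (if a = a' then Z1 else Y1 * Y1)
      = (if a = a' then Z1 - Y1 * Y1 else 0) + Y1 * Y1 := by
    intro a a'; split <;> ring
  rw [Finset.sum_congr rfl fun a _ => Finset.sum_congr rfl fun a' _ => h4 a a']
  have h5 : ∀ a : Fin b, (∑ a' : Fin b, ((if a = a' then Z1 - Y1 * Y1 else 0) + Y1 * Y1))
      = (Z1 - Y1 * Y1) + (b : ℝ) * (Y1 * Y1) := by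
    intro a
    rw [Finset.sum_add_distrib, Finset.sum_ite_eq Finset.univ a, Finset.sum_const]
    simp [Finset.card_univ]
  rw [Finset.sum_congr rfl fun a _ => h5 a, Finset.sum_const]
  simp only [Finset.card_univ, Fintype.card_fin, nsmul_eq_mul]
  ring

end KSaux6
section KSaux7
variable {b k : ℕ}

lemma KSZ_zero (M : Matrix (Fin k) (Fin k) ℝ) (ν : Fin k → ℝ) (j : Fin k) :
    KSZ M ν b 0 j = ν j ^ 2 := by
  unfold KSZ
  rw [KSsum_base]
  have : ∀ i : Fin k,
      (if KSroot ((KSe0 b k) i) = j then KSwt M 0 (KSemb ((KSe0 b k) i)) * KSsval ν 0 (KSemb ((KSe0 b k) i)) ^ 2 else 0)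
      = if i = j then ν i ^ 2 else 0 := by
    intro i
    rw [KSwt_zero, KSsval_zero, one_mul]
    rfl
  rw [Finset.sum_congr rfl fun i _ => this i, Finset.sum_ite_eq' Finset.univ j]
  simp

lemma KSZ_le (M : Matrix (Fin k) (Fin k) ℝ) (ν : Fin k → ℝ) (lam : ℝ)
    (hM0 : ∀ i j, 0 ≤ M i j) (hM1 : ∀ i, ∑ j, M i j = 1)
    (hMv : ∀ i, (∑ j, M i j * ν j) = lam * ν i)
    (hb : 2 ≤ b) (hKS : 1 < (b : ℝ) * lam ^ 2) :
    ∀ n (j : Fin k), KSZ M ν b n j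
      ≤ (((b : ℝ) * lam) ^ 2) ^ n
        * ((∑ i, ν i ^ 2) + (b : ℝ) ^ 2 * lam ^ 2 * (∑ i, ν i ^ 2) / ((b : ℝ) ^ 2 * lam ^ 2 - b)) := by
  set K : ℝ := ∑ i, ν i ^ 2 with hK
  set CC : ℝ := K + (b : ℝ) ^ 2 * lam ^ 2 * K / ((b : ℝ) ^ 2 * lam ^ 2 - b) with hCC
  have hb2 : (2 : ℝ) ≤ (b : ℝ) := by exact_mod_cast hb
  have hbpos : (0 : ℝ) < b := by linarith
  have hden : (0 : ℝ) < (b : ℝ) ^ 2 * lam ^ 2 - b := by nlinarith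
  have hK0 : 0 ≤ K := Finset.sum_nonneg fun i _ => sq_nonneg (ν i)
  have hCCK : K ≤ CC := by
    rw [hCC]
    have : 0 ≤ (b : ℝ) ^ 2 * lam ^ 2 * K / ((b : ℝ) ^ 2 * lam ^ 2 - b) :=
      div_nonneg (by positivity) hden.le
    linarith
  have hCC0 : 0 ≤ CC := le_trans hK0 hCCK
  have hνK : ∀ j : Fin k, ν j ^ 2 ≤ K :=
    fun j => Finset.single_le_sum (fun i _ => sq_nonneg (ν i)) (Finset.mem_univ j)
  have hCCden : ((b : ℝ) ^ 2 * lam ^ 2 - b) * CC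
      = ((b : ℝ) ^ 2 * lam ^ 2 - b) * K + (b : ℝ) ^ 2 * lam ^ 2 * K := by
    rw [hCC, mul_add, mul_div_cancel₀ _ (ne_of_gt hden)]
  have key : (b : ℝ) * CC + ((b : ℝ) ^ 2 - b) * lam ^ 2 * K ≤ (b : ℝ) ^ 2 * lam ^ 2 * CC := by
    nlinarith [mul_nonneg (mul_nonneg hbpos.le (sq_nonneg lam)) hK0,
      mul_nonneg hden.le hK0]
  intro n
  induction n with
  | zero =>
    intro j
    rw [KSZ_zero, pow_zero, one_mul]
    exact le_trans (hνK j) hCCK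
  | succ n ih =>
    intro i
    have hP0 : (0 : ℝ) ≤ (((b : ℝ) * lam) ^ 2) ^ n := pow_nonneg (sq_nonneg _) n
    have hS : (∑ j, M i j * KSZ M ν b n j) ≤ (((b : ℝ) * lam) ^ 2) ^ n * CC := by
      calc (∑ j, M i j * KSZ M ν b n j)
          ≤ ∑ j : Fin k, M i j * ((((b : ℝ) * lam) ^ 2) ^ n * CC) :=
            Finset.sum_le_sum fun j _ => mul_le_mul_of_nonneg_left (ih j) (hM0 i j)
        _ = (∑ j : Fin k, M i j) * ((((b : ℝ) * lam) ^ 2) ^ n * CC) := by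
            rw [Finset.sum_mul]
        _ = (((b : ℝ) * lam) ^ 2) ^ n * CC := by rw [hM1 i, one_mul]
    have hY : (((b : ℝ) * lam) ^ n * (lam * ν i)) ^ 2
        ≤ (((b : ℝ) * lam) ^ 2) ^ n * (lam ^ 2 * K) := by
      have h1 : (((b : ℝ) * lam) ^ n * (lam * ν i)) ^ 2
          = (((b : ℝ) * lam) ^ 2) ^ n * (lam ^ 2 * ν i ^ 2) := by
        rw [mul_pow, ← pow_mul, ← pow_mul, Nat.mul_comm n 2, Nat.mul_comm 2 n]
        ring
      rw [h1]
      refine mul_le_mul_of_nonneg_left ?_ hP0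
      exact mul_le_mul_of_nonneg_left (hνK i) (sq_nonneg lam)
    have hb2' : (0 : ℝ) ≤ (b : ℝ) ^ 2 - b := by nlinarith
    calc KSZ M ν b (n+1) i
        = (b : ℝ) * (∑ j, M i j * KSZ M ν b n j)
          + ((b : ℝ) ^ 2 - (b : ℝ)) * (((b : ℝ) * lam) ^ n * (lam * ν i)) ^ 2 :=
          KSZ_succ M ν lam hM1 hMv n i
      _ ≤ (b : ℝ) * ((((b : ℝ) * lam) ^ 2) ^ n * CC)
          + ((b : ℝ) ^ 2 - (b : ℝ)) * ((((b : ℝ) * lam) ^ 2) ^ n * (lam ^ 2 * K)) := by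
          exact add_le_add (mul_le_mul_of_nonneg_left hS hbpos.le)
            (mul_le_mul_of_nonneg_left hY hb2')
      _ = ((b : ℝ) * CC + ((b : ℝ) ^ 2 - b) * lam ^ 2 * K) * (((b : ℝ) * lam) ^ 2) ^ n := by
          ring
      _ ≤ ((b : ℝ) ^ 2 * lam ^ 2 * CC) * (((b : ℝ) * lam) ^ 2) ^ n :=
          mul_le_mul_of_nonneg_right key hP0
      _ = (((b : ℝ) * lam) ^ 2) ^ (n+1) * CC := by
          rw [pow_succ]
          ring

end KSaux7
open MeasureTheory ProbabilityTheory Finset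
theorem stmt_1
    {Ω : Type*} [MeasurableSpace Ω] (μ : Measure Ω) [IsProbabilityMeasure μ]
    (b k : ℕ) (hb : 2 ≤ b) (hk : 2 ≤ k)
    (M : Matrix (Fin k) (Fin k) ℝ) (pi : Fin k → ℝ) (lam : ℝ) (ν : Fin k → ℝ)
    (hM0 : ∀ i j, 0 ≤ M i j) (hM1 : ∀ i, ∑ j, M i j = 1)
    (hMirr : ∀ i j, ∃ n : ℕ, 0 < (M ^ n) i j)
    (hpipos : ∀ i, 0 < pi i) (hpisum : ∑ i, pi i = 1)
    (hpistat : ∀ j, ∑ i, pi i * M i j = pi j)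
    (heig : M.mulVec ν = lam • ν) (hν0 : ν ≠ 0)
    (hνnorm : ∑ i, pi i * ν i ^ 2 = 1)
    (hsecond : ∀ lam' : ℝ, lam' ≠ 1 →
      (∃ w : Fin k → ℝ, w ≠ 0 ∧ M.mulVec w = lam' • w) → |lam'| ≤ |lam|)
    (ξ : (n : ℕ) → (Fin n → Fin b) → Ω → Fin k)
    (hmeas : ∀ n x, Measurable (ξ n x))
    (hmarkov : ∀ n (f : (m : ℕ) → (Fin m → Fin b) → Fin k),
      μ {ω | ∀ m, m ≤ n → ∀ x : Fin m → Fin b, ξ m x ω = f m x}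
        = ENNReal.ofReal (pi (f 0 Fin.elim0) *
            ∏ m ∈ Finset.range n, ∏ x : Fin (m + 1) → Fin b,
              M (f m (x ∘ Fin.castSucc)) (f (m + 1) x)))
    (S : ℕ → Ω → ℝ)
    (hS : ∀ n ω, S n ω = (((b : ℝ) * lam) ^ n)⁻¹ * ∑ x : Fin n → Fin b, ν (ξ n x ω))
    (hKS : 1 < (b : ℝ) * lam ^ 2)
    :
    ∃ C : ℝ, ∀ (n : ℕ) (i : Fin k),
      ∫⁻ ω, ENNReal.ofReal ((S n ω) ^ 2) ∂(μ[|{ω | ξ 0 Fin.elim0 ω = i}])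
        ≤ ENNReal.ofReal C := by
  haveI : NeZero k := ⟨by omega⟩
  have hMv : ∀ i, (∑ j, M i j * ν j) = lam * ν i := by
    intro i
    have h := congrFun heig i
    simpa [Matrix.mulVec, dotProduct] using h
  have hb2 : (2 : ℝ) ≤ (b : ℝ) := by exact_mod_cast hb
  have hbpos : (0 : ℝ) < b := by linarith
  have hlam : lam ≠ 0 := by
    intro h; rw [h] at hKS; simp at hKS; linarith
  have hbl : ((b : ℝ) * lam) ≠ 0 := mul_ne_zero (ne_of_gt hbpos) hlam
  set K : ℝ := ∑ i, ν i ^ 2 with hK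
  set CC : ℝ := K + (b : ℝ) ^ 2 * lam ^ 2 * K / ((b : ℝ) ^ 2 * lam ^ 2 - b) with hCC
  have hden : (0 : ℝ) < (b : ℝ) ^ 2 * lam ^ 2 - b := by nlinarith
  have hK0 : 0 ≤ K := Finset.sum_nonneg fun i _ => sq_nonneg (ν i)
  have hCC0 : 0 ≤ CC := by
    rw [hCC]
    have : 0 ≤ (b : ℝ) ^ 2 * lam ^ 2 * K / ((b : ℝ) ^ 2 * lam ^ 2 - b) :=
      div_nonneg (by positivity) hden.le
    linarith
  obtain ⟨i0, -, hi0⟩ := Finset.exists_min_image Finset.univ pi Finset.univ_nonempty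
  refine ⟨(pi i0)⁻¹ * CC, ?_⟩
  intro n i
  set B : Set Ω := {ω | ξ 0 Fin.elim0 ω = i} with hBdef
  have hB : μ B = ENNReal.ofReal (pi i) := by
    have h := hmarkov 0 (fun _ _ => i)
    have hset : {ω | ∀ m, m ≤ 0 → ∀ x : Fin m → Fin b, ξ m x ω = (fun _ _ => i) m x} = B := by
      ext ω
      constructor
      · intro h'
        exact h' 0 le_rfl Fin.elim0
      · intro h' m hm x
        have hm0 : m = 0 := Nat.le_zero.mp hm
        subst hm0
        have hx : x = Fin.elim0 := funext fun j => j.elim0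
        rw [hx]
        exact h'
    rw [hset] at h
    simpa using h
  -- cylinder events
  set A : KSCfg b k n → Set Ω :=
    fun c => {ω | ∀ m, m ≤ n → ∀ x : Fin m → Fin b, ξ m x ω = KSemb c m x} with hAdef
  have hAmeas : ∀ c, MeasurableSet (A c) := by
    intro c
    have : A c = ⋂ m, ⋂ (_ : m ≤ n), ⋂ x : Fin m → Fin b, (ξ m x) ⁻¹' {KSemb c m x} := by
      ext ω
      simp [hAdef, Set.mem_iInter, Set.mem_preimage, Set.mem_singleton_iff]
    rw [this]
    exact MeasurableSet.iInter fun m => MeasurableSet.iInter fun _ =>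
      MeasurableSet.iInter fun x => (hmeas m x) (measurableSet_singleton _)
  have hAμ : ∀ c, μ (A c) = ENNReal.ofReal (pi (KSroot c) * KSwt M n (KSemb c)) := by
    intro c
    have h := hmarkov n (KSemb c)
    rw [KSemb_zero] at h
    exact h
  have hcover : (⋃ c : KSCfg b k n, A c) = Set.univ := by
    ext ω
    simp only [Set.mem_iUnion, Set.mem_univ, iff_true]
    refine ⟨fun m x => ξ (m : ℕ) x ω, ?_⟩
    intro m hm x
    exact (KSemb_lt (fun m x => ξ (m : ℕ) x ω : KSCfg b k n) (by omega : m < n + 1) x).symm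
  have hdisj : Pairwise (Function.onFun Disjoint A) := by
    intro c c' hne
    rw [Function.onFun, Set.disjoint_left]
    intro ω h1 h2
    apply hne
    funext m x
    have e1 := h1 (m : ℕ) (by omega) x
    have e2 := h2 (m : ℕ) (by omega) x
    rw [KSemb_lt _ (by omega : (m : ℕ) < n + 1)] at e1 e2
    exact e1.symm.trans e2
  have hSval : ∀ c : KSCfg b k n, ∀ ω ∈ A c,
      ENNReal.ofReal (S n ω ^ 2)
        = ENNReal.ofReal (((((b : ℝ) * lam) ^ n)⁻¹ * KSsval ν n (KSemb c)) ^ 2) := by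
    intro c ω hω
    congr 2
    rw [hS n ω]
    congr 1
    exact Finset.sum_congr rfl fun x _ => by rw [hω n le_rfl x]
  have hint : ∫⁻ ω, ENNReal.ofReal (S n ω ^ 2) ∂μ
      = ∑ c : KSCfg b k n,
          ENNReal.ofReal (((((b : ℝ) * lam) ^ n)⁻¹ * KSsval ν n (KSemb c)) ^ 2) * μ (A c) := by
    rw [← setLIntegral_univ, ← hcover, lintegral_iUnion hAmeas hdisj, tsum_fintype]
    refine Finset.sum_congr rfl fun c _ => ?_
    rw [setLIntegral_congr_fun (hAmeas c)
      (fun ω hω => hSval c ω hω), setLIntegral_const]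
  have hreal : (∑ c : KSCfg b k n,
        ((((b : ℝ) * lam) ^ n)⁻¹ * KSsval ν n (KSemb c)) ^ 2 * (pi (KSroot c) * KSwt M n (KSemb c)))
      ≤ CC := by
    have hterm : ∀ c : KSCfg b k n,
        ((((b : ℝ) * lam) ^ n)⁻¹ * KSsval ν n (KSemb c)) ^ 2 * (pi (KSroot c) * KSwt M n (KSemb c))
        = ((((b : ℝ) * lam) ^ 2) ^ n)⁻¹ *
            (pi (KSroot c) * (KSwt M n (KSemb c) * KSsval ν n (KSemb c) ^ 2)) := by
      intro c
      have hpp : (((b : ℝ) * lam) ^ 2) ^ n = (((b : ℝ) * lam) ^ n) ^ 2 := by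
        rw [← pow_mul, ← pow_mul, Nat.mul_comm]
      rw [hpp]
      field_simp [pow_ne_zero n hbl]
    rw [Finset.sum_congr rfl fun c _ => hterm c, ← Finset.mul_sum]
    rw [KSsum_root (fun j => pi j) (fun c => KSwt M n (KSemb c) * KSsval ν n (KSemb c) ^ 2)]
    have hZb := KSZ_le M ν lam hM0 hM1 hMv hb hKS n
    have hsum2 : (∑ j : Fin k, pi j * ∑ c : KSCfg b k n,
          (if KSroot c = j then KSwt M n (KSemb c) * KSsval ν n (KSemb c) ^ 2 else 0))
        ≤ (((b : ℝ) * lam) ^ 2) ^ n * CC := by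
      calc (∑ j : Fin k, pi j * ∑ c : KSCfg b k n,
            (if KSroot c = j then KSwt M n (KSemb c) * KSsval ν n (KSemb c) ^ 2 else 0))
          = ∑ j : Fin k, pi j * KSZ M ν b n j := rfl
        _ ≤ ∑ j : Fin k, pi j * ((((b : ℝ) * lam) ^ 2) ^ n * CC) :=
            Finset.sum_le_sum fun j _ => mul_le_mul_of_nonneg_left (hZb j) (hpipos j).le
        _ = (∑ j : Fin k, pi j) * ((((b : ℝ) * lam) ^ 2) ^ n * CC) := by rw [Finset.sum_mul]
        _ = (((b : ℝ) * lam) ^ 2) ^ n * CC := by rw [hpisum, one_mul]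
    have hPpos : (0 : ℝ) < (((b : ℝ) * lam) ^ 2) ^ n :=
      pow_pos (by positivity) n
    calc ((((b : ℝ) * lam) ^ 2) ^ n)⁻¹ * (∑ j : Fin k, pi j * ∑ c : KSCfg b k n,
          (if KSroot c = j then KSwt M n (KSemb c) * KSsval ν n (KSemb c) ^ 2 else 0))
        ≤ ((((b : ℝ) * lam) ^ 2) ^ n)⁻¹ * ((((b : ℝ) * lam) ^ 2) ^ n * CC) :=
          mul_le_mul_of_nonneg_left hsum2 (inv_nonneg.mpr hPpos.le)
      _ = CC := by field_simp
  have hsum : (∑ c : KSCfg b k n,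
        ENNReal.ofReal (((((b : ℝ) * lam) ^ n)⁻¹ * KSsval ν n (KSemb c)) ^ 2) * μ (A c))
      ≤ ENNReal.ofReal CC := by
    have : ∀ c : KSCfg b k n,
        ENNReal.ofReal (((((b : ℝ) * lam) ^ n)⁻¹ * KSsval ν n (KSemb c)) ^ 2) * μ (A c)
        = ENNReal.ofReal
            (((((b : ℝ) * lam) ^ n)⁻¹ * KSsval ν n (KSemb c)) ^ 2
              * (pi (KSroot c) * KSwt M n (KSemb c))) := by
      intro c
      rw [hAμ c, ← ENNReal.ofReal_mul (sq_nonneg _)]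
    rw [Finset.sum_congr rfl fun c _ => this c,
      ← ENNReal.ofReal_sum_of_nonneg fun c _ =>
        mul_nonneg (sq_nonneg _) (mul_nonneg (hpipos _).le (KSwt_nonneg M hM0 n _))]
    exact ENNReal.ofReal_le_ofReal hreal
  -- conditional measure
  show ∫⁻ ω, ENNReal.ofReal (S n ω ^ 2) ∂((μ B)⁻¹ • μ.restrict B) ≤ _
  rw [lintegral_smul_measure]
  have hres : ∫⁻ ω, ENNReal.ofReal (S n ω ^ 2) ∂(μ.restrict B)
      ≤ ∫⁻ ω, ENNReal.ofReal (S n ω ^ 2) ∂μ :=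
    lintegral_mono' Measure.restrict_le_self le_rfl
  calc (μ B)⁻¹ * ∫⁻ ω, ENNReal.ofReal (S n ω ^ 2) ∂(μ.restrict B)
      ≤ (μ B)⁻¹ * ENNReal.ofReal CC := by
        refine mul_le_mul' le_rfl (le_trans hres ?_)
        rw [hint]
        exact hsum
    _ = (ENNReal.ofReal (pi i))⁻¹ * ENNReal.ofReal CC := by rw [hB]
    _ = ENNReal.ofReal ((pi i)⁻¹ * CC) := by
        rw [← ENNReal.ofReal_inv_of_pos (hpipos i),
          ← ENNReal.ofReal_mul (inv_nonneg.mpr (hpipos i).le)]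
    _ ≤ ENNReal.ofReal ((pi i0)⁻¹ * CC) := by
        refine ENNReal.ofReal_le_ofReal ?_
        refine mul_le_mul_of_nonneg_right ?_ hCC0
        exact inv_anti₀ (hpipos i0) (hi0 i (Finset.mem_univ i))
end

section
/- (Exponential moment bound near zero) Assume bλ² > 1. There exist c' = c'(M) < ∞ and ζ₀ ∈ (0, ∞) such that for all n ≥ 0, all states i ∈ [k], and all ζ with |ζ| < ζ₀, E[e^{ζ S_n} | ξ_ρ = i] ≤ exp(ν_i ζ + c' ζ²). -/
open Finset

namespace Stmt4Aux

def Cfg (b k : ℕ) : ℕ → Type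
  | 0 => Fin k
  | n+1 => Fin k × (Fin b → Cfg b k n)

variable {b k : ℕ}

instance instFintypeCfg : ∀ n, Fintype (Cfg b k n)
  | 0 => inferInstanceAs (Fintype (Fin k))
  | n+1 => letI := instFintypeCfg n; inferInstanceAs (Fintype (Fin k × (Fin b → Cfg b k n)))

instance instDecEqCfg : ∀ n, DecidableEq (Cfg b k n)
  | 0 => inferInstanceAs (DecidableEq (Fin k))
  | n+1 => letI := instDecEqCfg n; inferInstanceAs (DecidableEq (Fin k × (Fin b → Cfg b k n)))

def root : ∀ {n : ℕ}, Cfg b k n → Fin k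
  | 0, g => g
  | _+1, g => g.1

/-- levels function: level `m` labels (junk for `m > n`). -/
def lvl : ∀ {n : ℕ}, Cfg b k n → (m : ℕ) → (Fin m → Fin b) → Fin k
  | 0, g, _, _ => root g
  | _+1, g, 0, _ => g.1
  | n+1, g, m+1, x => lvl (g.2 (x 0)) m (Fin.tail x)

def wt (M : Matrix (Fin k) (Fin k) ℝ) : ∀ {n : ℕ}, Cfg b k n → ℝ
  | 0, _ => 1
  | _+1, g => ∏ c : Fin b, (M g.1 (root (g.2 c)) * wt M (g.2 c))

def sν (ν : Fin k → ℝ) : ∀ {n : ℕ}, Cfg b k n → ℝ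
  | 0, g => ν g
  | _+1, g => ∑ c : Fin b, sν ν (g.2 c)

noncomputable def Z (M : Matrix (Fin k) (Fin k) ℝ) (ν : Fin k → ℝ) : ℕ → Fin k → ℝ → ℝ
  | 0, i, t => Real.exp (t * ν i)
  | n+1, i, t => (∑ j, M i j * Z M ν n j t) ^ b

def enc (f : (m : ℕ) → (Fin m → Fin b) → Fin k) : ∀ n, Cfg b k n
  | 0 => f 0 Fin.elim0
  | n+1 => (f 0 Fin.elim0, fun c => enc (fun m x => f (m+1) (Fin.cons c x)) n)

lemma sum_pi_succ {β : Type*} [AddCommMonoid β] {n : ℕ} (F : (Fin (n+1) → Fin b) → β) :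
    ∑ x, F x = ∑ c : Fin b, ∑ y : Fin n → Fin b, F (Fin.cons c y) := by
  rw [← Fintype.sum_prod_type']
  exact (Fintype.sum_equiv (Fin.consEquiv (fun _ => Fin b)) (fun p => F (Fin.cons p.1 p.2)) F
    (fun p => rfl)).symm

lemma prod_pi_succ {β : Type*} [CommMonoid β] {n : ℕ} (F : (Fin (n+1) → Fin b) → β) :
    ∏ x, F x = ∏ c : Fin b, ∏ y : Fin n → Fin b, F (Fin.cons c y) := by
  rw [← Fintype.prod_prod_type']
  exact (Fintype.prod_equiv (Fin.consEquiv (fun _ => Fin b)) (fun p => F (Fin.cons p.1 p.2)) F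
    (fun p => rfl)).symm

lemma cons_comp_castSucc {m : ℕ} (c : Fin b) (y : Fin (m+1) → Fin b) :
    (Fin.cons c y : Fin (m+2) → Fin b) ∘ Fin.castSucc = Fin.cons c (y ∘ Fin.castSucc) := by
  funext j
  induction j using Fin.cases with
  | zero => simp
  | succ j => simp only [Function.comp_apply, ← Fin.succ_castSucc, Fin.cons_succ]

lemma lvl_zero {n : ℕ} (g : Cfg b k n) (x : Fin 0 → Fin b) : lvl g 0 x = root g := by
  cases n <;> rfl

lemma lvl_enc :
    ∀ (n : ℕ) (f : (m : ℕ) → (Fin m → Fin b) → Fin k) (m : ℕ), m ≤ n →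
      ∀ x : Fin m → Fin b, lvl (enc f n) m x = f m x
  | 0, f, m, hm, x => by
    obtain rfl : m = 0 := Nat.le_zero.mp hm
    show root (enc f 0) = f 0 x
    show f 0 Fin.elim0 = f 0 x
    exact congrArg (f 0) (Subsingleton.elim _ _)
  | n+1, f, 0, hm, x => by
    show f 0 Fin.elim0 = f 0 x
    exact congrArg (f 0) (Subsingleton.elim _ _)
  | n+1, f, m+1, hm, x => by
    show lvl (enc (fun m' x' => f (m'+1) (Fin.cons (x 0) x')) n) m (Fin.tail x) = f (m+1) x
    rw [lvl_enc n _ m (Nat.succ_le_succ_iff.mp hm)]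
    exact congrArg (f (m+1)) (Fin.cons_self_tail x)

lemma lvl_cons {n : ℕ} (g : Cfg b k (n+1)) (m : ℕ) (c : Fin b) (x : Fin m → Fin b) :
    lvl g (m+1) (Fin.cons c x) = lvl (g.2 c) m x := by
  simp [lvl, Fin.tail_cons]

lemma enc_lvl : ∀ (n : ℕ) (g g' : Cfg b k n),
    (∀ m ≤ n, ∀ x : Fin m → Fin b, lvl g m x = lvl g' m x) → g = g'
  | 0, g, g', h => h 0 le_rfl Fin.elim0
  | n+1, g, g', h => by
    refine Prod.ext (h 0 (Nat.zero_le _) Fin.elim0) (funext fun c => ?_)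
    refine enc_lvl n _ _ (fun m hm x => ?_)
    rw [← lvl_cons g m c x, ← lvl_cons g' m c x]
    exact h (m+1) (Nat.succ_le_succ hm) _

lemma sν_eq (ν : Fin k → ℝ) :
    ∀ (n : ℕ) (g : Cfg b k n), (∑ x : Fin n → Fin b, ν (lvl g n x)) = sν ν g
  | 0, g => by
    rw [Fintype.sum_subsingleton _ Fin.elim0]
    rfl
  | n+1, g => by
    rw [sum_pi_succ]
    show _ = ∑ c : Fin b, sν ν (g.2 c)
    refine Finset.sum_congr rfl fun c _ => ?_
    rw [← sν_eq ν n (g.2 c)]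
    exact Finset.sum_congr rfl fun y _ => congrArg ν (lvl_cons g n c y)

/-- bridge: the `wt` equals the product in `hmarkov`. -/
lemma wt_eq (M : Matrix (Fin k) (Fin k) ℝ) :
    ∀ (n : ℕ) (g : Cfg b k n),
      (∏ m ∈ Finset.range n, ∏ x : Fin (m + 1) → Fin b,
        M (lvl g m (x ∘ Fin.castSucc)) (lvl g (m+1) x)) = wt M g
  | 0, g => rfl
  | n+1, g => by
    have h0 : (∏ x : Fin (0+1) → Fin b, M (lvl g 0 (x ∘ Fin.castSucc)) (lvl g (0+1) x))
        = ∏ c : Fin b, M g.1 (root (g.2 c)) := by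
      rw [prod_pi_succ]
      refine Finset.prod_congr rfl fun c _ => ?_
      rw [Fintype.prod_subsingleton _ Fin.elim0, lvl_cons g 0 c, lvl_zero, lvl_zero]
      rfl
    have hstep : ∀ m ∈ Finset.range n,
        (∏ x : Fin (m+1+1) → Fin b, M (lvl g (m+1) (x ∘ Fin.castSucc)) (lvl g (m+1+1) x))
        = ∏ c : Fin b, ∏ y : Fin (m+1) → Fin b,
            M (lvl (g.2 c) m (y ∘ Fin.castSucc)) (lvl (g.2 c) (m+1) y) := by
      intro m _
      rw [prod_pi_succ]
      refine Finset.prod_congr rfl fun c _ => Finset.prod_congr rfl fun y _ => ?_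
      rw [cons_comp_castSucc, lvl_cons, lvl_cons]
    rw [Finset.prod_range_succ', Finset.prod_congr rfl hstep, Finset.prod_comm, h0,
      ← Finset.prod_mul_distrib]
    show _ = ∏ c : Fin b, (M g.1 (root (g.2 c)) * wt M (g.2 c))
    exact Finset.prod_congr rfl fun c _ => by rw [wt_eq M n (g.2 c), mul_comm]

lemma Z_eq (M : Matrix (Fin k) (Fin k) ℝ) (ν : Fin k → ℝ) :
    ∀ (n : ℕ) (i : Fin k) (t : ℝ),
      (∑ g : Cfg b k n, if root g = i then Real.exp (t * sν ν g) * wt M g else 0)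
        = Z (b := b) M ν n i t
  | 0, i, t => by
    show (∑ g : Fin k, if g = i then Real.exp (t * ν g) * 1 else 0) = Real.exp (t * ν i)
    rw [Finset.sum_ite_eq' Finset.univ i (fun g => Real.exp (t * ν g) * 1)]
    simp
  | n+1, i, t => by
    show (∑ g : Fin k × (Fin b → Cfg b k n),
        if g.1 = i then Real.exp (t * ∑ c, sν ν (g.2 c)) *
          ∏ c : Fin b, (M g.1 (root (g.2 c)) * wt M (g.2 c)) else 0)
      = (∑ j, M i j * Z (b := b) M ν n j t) ^ b
    rw [Fintype.sum_prod_type]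
    dsimp only
    have pull : ∀ x : Fin k, (∑ y : Fin b → Cfg b k n,
        if x = i then Real.exp (t * ∑ c, sν ν (y c)) *
          ∏ c : Fin b, (M x (root (y c)) * wt M (y c)) else 0)
        = if x = i then (∑ y : Fin b → Cfg b k n, Real.exp (t * ∑ c, sν ν (y c)) *
          ∏ c : Fin b, (M x (root (y c)) * wt M (y c))) else 0 := by
      intro x; split <;> simp
    rw [Finset.sum_congr rfl fun x _ => pull x, Finset.sum_ite_eq' Finset.univ i
      (fun i' => ∑ h : Fin b → Cfg b k n, Real.exp (t * ∑ c, sν ν (h c)) *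
          ∏ c : Fin b, (M i' (root (h c)) * wt M (h c)))]
    simp only [Finset.mem_univ, if_true]
    have key : ∀ h : Fin b → Cfg b k n,
        Real.exp (t * ∑ c, sν ν (h c)) * ∏ c : Fin b, (M i (root (h c)) * wt M (h c))
        = ∏ c : Fin b, (M i (root (h c)) * (Real.exp (t * sν ν (h c)) * wt M (h c))) := by
      intro h
      rw [Finset.mul_sum, Real.exp_sum, ← Finset.prod_mul_distrib]
      exact Finset.prod_congr rfl fun c _ => by ring
    rw [Finset.sum_congr rfl fun h _ => key h]
    have hp : (∑ g' : Cfg b k n, M i (root g') * (Real.exp (t * sν ν g') * wt M g')) ^ b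
        = ∑ h : Fin b → Cfg b k n, ∏ c : Fin b,
            (M i (root (h c)) * (Real.exp (t * sν ν (h c)) * wt M (h c))) :=
      Fintype.sum_pow _ b
    rw [← hp]
    congr 1
    have split : ∀ g' : Cfg b k n,
        M i (root g') * (Real.exp (t * sν ν g') * wt M g')
        = ∑ j, if root g' = j then M i j * (Real.exp (t * sν ν g') * wt M g') else 0 := by
      intro g'
      rw [Finset.sum_ite_eq Finset.univ (root g')
        (fun j => M i j * (Real.exp (t * sν ν g') * wt M g'))]
      simp
    rw [Finset.sum_congr rfl fun g' _ => split g', Finset.sum_comm]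
    refine Finset.sum_congr rfl fun j _ => ?_
    rw [← Z_eq M ν n j t, Finset.mul_sum]
    refine Finset.sum_congr rfl fun g' _ => ?_
    rw [mul_ite, mul_zero]


lemma wt_nonneg {M : Matrix (Fin k) (Fin k) ℝ} (hM0 : ∀ i j, 0 ≤ M i j) :
    ∀ {n : ℕ} (g : Cfg b k n), 0 ≤ wt M g
  | 0, _ => zero_le_one
  | _+1, g => Finset.prod_nonneg fun c _ => mul_nonneg (hM0 _ _) (wt_nonneg hM0 (g.2 c))

lemma Z_nonneg {M : Matrix (Fin k) (Fin k) ℝ} (hM0 : ∀ i j, 0 ≤ M i j) {ν : Fin k → ℝ} :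
    ∀ {n : ℕ} (i : Fin k) (t : ℝ), 0 ≤ Z (b := b) M ν n i t
  | 0, i, t => (Real.exp_pos _).le
  | n+1, i, t => pow_nonneg
      (Finset.sum_nonneg fun j _ => mul_nonneg (hM0 _ _) (Z_nonneg hM0 j t)) b

lemma exp_le_quadratic {x : ℝ} (hx : |x| ≤ 1) : Real.exp x ≤ 1 + x + x^2 := by
  have h := Real.exp_bound hx (n := 2) (by norm_num)
  have h2 : ∑ m ∈ Finset.range 2, x ^ m / (m.factorial : ℝ) = 1 + x := by
    simp [Finset.sum_range_succ]
  rw [h2] at h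
  have h3 := (abs_le.mp h).2
  have h4 : |x| ^ 2 = x ^ 2 := sq_abs x
  norm_num at h3
  nlinarith [sq_nonneg x]

lemma Z_le {M : Matrix (Fin k) (Fin k) ℝ} {ν : Fin k → ℝ} {lam : ℝ}
    (hb : 2 ≤ b)
    (hM0 : ∀ i j, 0 ≤ M i j) (hM1 : ∀ i, ∑ j, M i j = 1)
    (heig : M.mulVec ν = lam • ν)
    (hKS : 1 < (b : ℝ) * lam ^ 2) :
    ∃ c' : ℝ, 0 ≤ c' ∧ ∃ ζ₀ : ℝ, 0 < ζ₀ ∧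
      ∀ (n : ℕ) (i : Fin k) (ζ : ℝ), |ζ| ≤ ζ₀ →
        Z (b := b) M ν n i (ζ * ((((b : ℝ) * lam) ^ n)⁻¹)) ≤
          Real.exp (ν i * ζ + c' * ζ ^ 2) := by
  have hb0 : (0:ℝ) < b := by positivity
  have hb2 : (2:ℝ) ≤ b := by exact_mod_cast hb
  set V : ℝ := ∑ j, |ν j| with hV
  have hVnn : 0 ≤ V := Finset.sum_nonneg fun j _ => abs_nonneg _
  have hVle : ∀ j, |ν j| ≤ V := fun j =>
    Finset.single_le_sum (f := fun j => |ν j|) (fun _ _ => abs_nonneg _) (Finset.mem_univ j)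
  set D : ℝ := (b : ℝ) * lam ^ 2 - 1 with hD
  have hD0 : 0 < D := by simp [hD]; linarith
  set c' : ℝ := (V + 1) ^ 2 / D with hc'
  have hc'0 : 0 ≤ c' := by positivity
  set ζ₀ : ℝ := 1 / (V + c' + 1) with hζ₀
  have hζ₀pos : 0 < ζ₀ := by positivity
  have hζ₀le1 : ζ₀ ≤ 1 := by
    rw [hζ₀, div_le_one (by linarith)]; linarith
  have hcz : c' * ζ₀ ≤ 1 := by
    rw [hζ₀, mul_one_div, div_le_one (by linarith)]; linarith
  have hvz : (V + c') * ζ₀ ≤ 1 := by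
    rw [hζ₀, mul_one_div, div_le_one (by linarith)]; linarith
  have hlam0 : lam ≠ 0 := by
    intro h; rw [h] at hKS; norm_num at hKS
  have hblam : 1 < (b : ℝ) * |lam| := by
    nlinarith [abs_nonneg lam, sq_abs lam]
  have hblam0 : (b : ℝ) * lam ≠ 0 := mul_ne_zero (ne_of_gt hb0) hlam0
  refine ⟨c', hc'0, ζ₀, hζ₀pos, ?_⟩
  intro n
  induction n with
  | zero =>
    intro i ζ hζ
    show Real.exp (ζ * (((((b : ℝ) * lam) ^ 0)⁻¹)) * ν i) ≤ _
    rw [Real.exp_le_exp]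
    have : ζ * ((((b : ℝ) * lam) ^ 0)⁻¹) * ν i = ν i * ζ := by simp [mul_comm]
    rw [this]
    nlinarith [sq_nonneg ζ]
  | succ n ih =>
    intro i ζ hζ
    set ζ' : ℝ := ζ / ((b : ℝ) * lam) with hζ'
    have hd : (1:ℝ) ≤ |(b:ℝ)*lam| := by
      rw [abs_mul, abs_of_nonneg hb0.le]; linarith
    have habs : |ζ'| ≤ ζ₀ := by
      rw [hζ', abs_div]
      calc |ζ| / |(b:ℝ)*lam| ≤ |ζ| := div_le_self (abs_nonneg ζ) hd
        _ ≤ ζ₀ := hζ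
    have ht : ζ * ((((b : ℝ) * lam) ^ (n+1))⁻¹) = ζ' * ((((b : ℝ) * lam) ^ n)⁻¹) := by
      rw [hζ', pow_succ, mul_inv, div_eq_mul_inv]
      ring
    show (∑ j, M i j * Z (b := b) M ν n j (ζ * ((((b : ℝ) * lam) ^ (n+1))⁻¹))) ^ b ≤ _
    rw [ht]
    set a : Fin k → ℝ := fun j => ν j * ζ' + c' * ζ' ^ 2 with ha
    have haabs : ∀ j, |a j| ≤ (V + 1) * |ζ'| := by
      intro j
      rw [ha]
      calc |ν j * ζ' + c' * ζ' ^ 2| ≤ |ν j * ζ'| + |c' * ζ' ^ 2| := abs_add_le _ _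
        _ ≤ V * |ζ'| + c' * ζ₀ * |ζ'| := by
            rw [abs_mul, abs_mul]
            have h1 : |ν j| * |ζ'| ≤ V * |ζ'| :=
              mul_le_mul_of_nonneg_right (hVle j) (abs_nonneg _)
            have h2 : |c'| * |ζ' ^ 2| ≤ c' * ζ₀ * |ζ'| := by
              rw [abs_of_nonneg hc'0, sq, abs_mul]
              calc c' * (|ζ'| * |ζ'|) ≤ c' * (ζ₀ * |ζ'|) := by
                    exact mul_le_mul_of_nonneg_left
                      (mul_le_mul_of_nonneg_right habs (abs_nonneg _)) hc'0
                _ = c' * ζ₀ * |ζ'| := by ring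
            linarith
        _ ≤ (V + 1) * |ζ'| := by nlinarith [abs_nonneg ζ']
    have hv1z : (V + 1) * ζ₀ ≤ 1 := by
      rw [hζ₀, mul_one_div, div_le_one (by linarith)]; linarith
    have haabs1 : ∀ j, |a j| ≤ 1 := by
      intro j
      calc |a j| ≤ (V + 1) * |ζ'| := haabs j
        _ ≤ (V + 1) * ζ₀ := by
            exact mul_le_mul_of_nonneg_left habs (by linarith)
        _ ≤ 1 := hv1z
    have hsum_le : (∑ j, M i j * Z (b := b) M ν n j (ζ' * ((((b : ℝ) * lam) ^ n)⁻¹)))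
        ≤ Real.exp (lam * ν i * ζ' + (c' + (V + 1)^2) * ζ' ^ 2) := by
      calc (∑ j, M i j * Z (b := b) M ν n j (ζ' * ((((b : ℝ) * lam) ^ n)⁻¹)))
          ≤ ∑ j, M i j * (1 + a j + (a j)^2) := by
            apply Finset.sum_le_sum
            intro j _
            apply mul_le_mul_of_nonneg_left _ (hM0 i j)
            calc Z (b := b) M ν n j (ζ' * ((((b : ℝ) * lam) ^ n)⁻¹))
                ≤ Real.exp (a j) := ih j ζ' habs
              _ ≤ 1 + a j + (a j)^2 := exp_le_quadratic (haabs1 j)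
        _ = 1 + (lam * ν i * ζ' + c' * ζ' ^ 2) + ∑ j, M i j * (a j)^2 := by
            have hmv : ∑ j, M i j * ν j = lam * ν i := by
              have := congrFun heig i
              simpa [Matrix.mulVec, dotProduct, Pi.smul_apply] using this
            have expand : ∀ j : Fin k, M i j * (1 + a j + (a j)^2)
                = M i j + (M i j * ν j) * ζ' + M i j * (c' * ζ' ^ 2) + M i j * (a j)^2 :=
              fun j => by rw [ha]; ring
            rw [Finset.sum_congr rfl fun j _ => expand j, Finset.sum_add_distrib,
              Finset.sum_add_distrib, Finset.sum_add_distrib, ← Finset.sum_mul,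
              ← Finset.sum_mul, hmv, hM1]
            ring
        _ ≤ 1 + (lam * ν i * ζ' + c' * ζ' ^ 2) + (V+1)^2 * ζ' ^ 2 := by
            gcongr
            calc ∑ j, M i j * (a j)^2 ≤ ∑ j, M i j * ((V+1)^2 * ζ' ^ 2) := by
                  apply Finset.sum_le_sum
                  intro j _
                  apply mul_le_mul_of_nonneg_left _ (hM0 i j)
                  calc (a j)^2 = |a j|^2 := (sq_abs _).symm
                    _ ≤ ((V+1) * |ζ'|)^2 := by
                        apply pow_le_pow_left₀ (abs_nonneg _) (haabs j)
                    _ = (V+1)^2 * ζ' ^ 2 := by rw [mul_pow, sq_abs]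
              _ = (V+1)^2 * ζ' ^ 2 := by rw [← Finset.sum_mul, hM1, one_mul]
        _ ≤ Real.exp (lam * ν i * ζ' + (c' + (V + 1)^2) * ζ' ^ 2) := by
            have := Real.add_one_le_exp (lam * ν i * ζ' + (c' + (V + 1)^2) * ζ' ^ 2)
            linarith
    calc (∑ j, M i j * Z (b := b) M ν n j (ζ' * ((((b : ℝ) * lam) ^ n)⁻¹))) ^ b
        ≤ (Real.exp (lam * ν i * ζ' + (c' + (V + 1)^2) * ζ' ^ 2)) ^ b := by
          apply pow_le_pow_left₀ _ hsum_le
          exact Finset.sum_nonneg fun j _ => mul_nonneg (hM0 i j) (Z_nonneg hM0 j _)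
      _ = Real.exp ((b:ℝ) * (lam * ν i * ζ' + (c' + (V + 1)^2) * ζ' ^ 2)) := by
          rw [← Real.exp_nat_mul]
      _ = Real.exp (ν i * ζ + c' * ζ ^ 2) := by
          congr 1
          have h1 : (b:ℝ) * (lam * ν i * ζ') = ν i * ζ := by
            rw [hζ']; field_simp
          have hDne : ((b:ℝ) * lam ^ 2 - 1) ≠ 0 := by
            have : (0:ℝ) < (b:ℝ) * lam ^ 2 - 1 := by linarith
            exact ne_of_gt this
          have h2 : (b:ℝ) * ((c' + (V + 1)^2) * ζ' ^ 2) = c' * ζ ^ 2 := by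
            rw [hζ', hc', hD]
            field_simp
            ring
          rw [mul_add, h1, h2]

end Stmt4Aux

open MeasureTheory ProbabilityTheory Finset
theorem stmt_4
    {Ω : Type*} [MeasurableSpace Ω] (μ : Measure Ω) [IsProbabilityMeasure μ]
    (b k : ℕ) (hb : 2 ≤ b) (hk : 2 ≤ k)
    (M : Matrix (Fin k) (Fin k) ℝ) (pi : Fin k → ℝ) (lam : ℝ) (ν : Fin k → ℝ)
    (hM0 : ∀ i j, 0 ≤ M i j) (hM1 : ∀ i, ∑ j, M i j = 1)
    (hMirr : ∀ i j, ∃ n : ℕ, 0 < (M ^ n) i j)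
    (hpipos : ∀ i, 0 < pi i) (hpisum : ∑ i, pi i = 1)
    (hpistat : ∀ j, ∑ i, pi i * M i j = pi j)
    (heig : M.mulVec ν = lam • ν) (hν0 : ν ≠ 0)
    (hνnorm : ∑ i, pi i * ν i ^ 2 = 1)
    (hsecond : ∀ lam' : ℝ, lam' ≠ 1 →
      (∃ w : Fin k → ℝ, w ≠ 0 ∧ M.mulVec w = lam' • w) → |lam'| ≤ |lam|)
    (ξ : (n : ℕ) → (Fin n → Fin b) → Ω → Fin k)
    (hmeas : ∀ n x, Measurable (ξ n x))
    (hmarkov : ∀ n (f : (m : ℕ) → (Fin m → Fin b) → Fin k),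
      μ {ω | ∀ m, m ≤ n → ∀ x : Fin m → Fin b, ξ m x ω = f m x}
        = ENNReal.ofReal (pi (f 0 Fin.elim0) *
            ∏ m ∈ Finset.range n, ∏ x : Fin (m + 1) → Fin b,
              M (f m (x ∘ Fin.castSucc)) (f (m + 1) x)))
    (S : ℕ → Ω → ℝ)
    (hS : ∀ n ω, S n ω = (((b : ℝ) * lam) ^ n)⁻¹ * ∑ x : Fin n → Fin b, ν (ξ n x ω))
    (hKS : 1 < (b : ℝ) * lam ^ 2)
    :
    ∃ c' : ℝ, ∃ ζ₀ : ℝ, 0 < ζ₀ ∧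
      ∀ (n : ℕ) (i : Fin k) (ζ : ℝ), |ζ| < ζ₀ →
        ∫⁻ ω, ENNReal.ofReal (Real.exp (ζ * S n ω)) ∂(μ[|{ω | ξ 0 Fin.elim0 ω = i}])
          ≤ ENNReal.ofReal (Real.exp (ν i * ζ + c' * ζ ^ 2)) := by
  classical
  obtain ⟨c', hc'0, ζ₀, hζ₀pos, hZle⟩ := Stmt4Aux.Z_le hb hM0 hM1 heig hKS (ν := ν)
  refine ⟨c', ζ₀, hζ₀pos, ?_⟩
  intro n i ζ hζ
  have main : ∫⁻ ω, ENNReal.ofReal (Real.exp (ζ * S n ω)) ∂(μ[|{ω | ξ 0 Fin.elim0 ω = i}])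
      = ENNReal.ofReal (Stmt4Aux.Z (b := b) M ν n i (ζ * ((((b : ℝ) * lam) ^ n)⁻¹))) := by
    set t : ℝ := ζ * ((((b : ℝ) * lam) ^ n)⁻¹) with htdef
    set A : Set Ω := {ω | ξ 0 Fin.elim0 ω = i} with hAdef
    have hA : MeasurableSet A := hmeas 0 Fin.elim0 (measurableSet_singleton i)
    have hμA : μ A = ENNReal.ofReal (pi i) := by
      have h := hmarkov 0 (fun m _ => i)
      have hset : {ω | ∀ m, m ≤ 0 → ∀ x : Fin m → Fin b, ξ m x ω = i} = A := by
        ext ω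
        constructor
        · intro h'; exact h' 0 le_rfl Fin.elim0
        · intro hω m hm x
          obtain rfl : m = 0 := Nat.le_zero.mp hm
          rw [show x = Fin.elim0 from Subsingleton.elim x _]
          exact hω
      rw [hset] at h
      simpa using h
    set E : Stmt4Aux.Cfg b k n → Set Ω :=
      fun g => {ω | ∀ m, m ≤ n → ∀ x : Fin m → Fin b, ξ m x ω = Stmt4Aux.lvl g m x}
      with hEdef
    have hE : ∀ g, MeasurableSet (E g) := by
      intro g
      have heq : E g = ⋂ (m : ℕ) (_ : m ≤ n) (x : Fin m → Fin b),
          (ξ m x) ⁻¹' {Stmt4Aux.lvl g m x} := by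
        ext ω
        simp [hEdef, Set.mem_iInter]
      rw [heq]
      exact MeasurableSet.iInter fun m => MeasurableSet.iInter fun _ =>
        MeasurableSet.iInter fun x => hmeas m x (measurableSet_singleton _)
    have hEμ : ∀ g, μ (E g) = ENNReal.ofReal (pi (Stmt4Aux.root g) * Stmt4Aux.wt M g) := by
      intro g
      have h := hmarkov n (Stmt4Aux.lvl g)
      rw [Stmt4Aux.wt_eq, Stmt4Aux.lvl_zero] at h
      exact h
    have hcover : (⋃ g, E g) = Set.univ := by
      refine Set.eq_univ_of_forall fun ω => ?_
      refine Set.mem_iUnion.mpr ⟨Stmt4Aux.enc (fun m x => ξ m x ω) n, fun m hm x => ?_⟩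
      exact (Stmt4Aux.lvl_enc n (fun m x => ξ m x ω) m hm x).symm
    have hdisj : Pairwise (Function.onFun Disjoint E) := by
      intro g g' hgg'
      rw [Function.onFun, Set.disjoint_left]
      intro ω hω hω'
      exact hgg' (Stmt4Aux.enc_lvl n g g' fun m hm x => (hω m hm x).symm.trans (hω' m hm x))
    unfold ProbabilityTheory.cond
    rw [lintegral_smul_measure, hμA]
    have hres : ∫⁻ ω, ENNReal.ofReal (Real.exp (ζ * S n ω)) ∂(μ.restrict A)
        = ∑ g : Stmt4Aux.Cfg b k n, (if Stmt4Aux.root g = i then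
            ENNReal.ofReal (Real.exp (t * Stmt4Aux.sν ν g)) *
              ENNReal.ofReal (pi i * Stmt4Aux.wt M g) else 0) := by
      rw [← setLIntegral_univ, ← hcover, lintegral_iUnion hE hdisj, tsum_fintype]
      refine Finset.sum_congr rfl fun g _ => ?_
      rw [Measure.restrict_restrict (hE g)]
      by_cases hroot : Stmt4Aux.root g = i
      · rw [if_pos hroot]
        have hsub : E g ∩ A = E g := by
          refine Set.inter_eq_left.mpr fun ω hω => ?_
          show ξ 0 Fin.elim0 ω = i
          rw [hω 0 (Nat.zero_le n) Fin.elim0, Stmt4Aux.lvl_zero, hroot]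
        rw [hsub]
        have hconst : ∀ ω ∈ E g, ENNReal.ofReal (Real.exp (ζ * S n ω))
            = ENNReal.ofReal (Real.exp (t * Stmt4Aux.sν ν g)) := by
          intro ω hω
          have hsval : ζ * S n ω = t * Stmt4Aux.sν ν g := by
            rw [hS n ω, show (∑ x : Fin n → Fin b, ν (ξ n x ω))
                = ∑ x : Fin n → Fin b, ν (Stmt4Aux.lvl g n x) from
              Finset.sum_congr rfl fun x _ => by rw [hω n le_rfl x],
              Stmt4Aux.sν_eq, htdef]
            ring
          rw [hsval]
        rw [setLIntegral_congr_fun (hE g) hconst, setLIntegral_const,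
          hEμ g, hroot]
      · rw [if_neg hroot]
        have hsub : E g ∩ A = ∅ := by
          ext ω
          simp only [Set.mem_inter_iff, Set.mem_empty_iff_false, iff_false, not_and]
          intro hω hω2
          refine hroot ?_
          have h1 : ξ 0 Fin.elim0 ω = Stmt4Aux.root g := by
            rw [hω 0 (Nat.zero_le n) Fin.elim0, Stmt4Aux.lvl_zero]
          have h2 : ξ 0 Fin.elim0 ω = i := hω2
          rw [← h1, h2]
        rw [hsub, Measure.restrict_empty, lintegral_zero_measure]
    rw [hres]
    have hterm : ∀ g : Stmt4Aux.Cfg b k n, (if Stmt4Aux.root g = i then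
          ENNReal.ofReal (Real.exp (t * Stmt4Aux.sν ν g)) *
            ENNReal.ofReal (pi i * Stmt4Aux.wt M g) else 0)
        = ENNReal.ofReal (pi i) * ENNReal.ofReal (if Stmt4Aux.root g = i then
            Real.exp (t * Stmt4Aux.sν ν g) * Stmt4Aux.wt M g else 0) := by
      intro g
      by_cases h : Stmt4Aux.root g = i
      · rw [if_pos h, if_pos h, ← ENNReal.ofReal_mul (Real.exp_nonneg _),
          show Real.exp (t * Stmt4Aux.sν ν g) * (pi i * Stmt4Aux.wt M g)
            = pi i * (Real.exp (t * Stmt4Aux.sν ν g) * Stmt4Aux.wt M g) by ring,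
          ENNReal.ofReal_mul (le_of_lt (hpipos i))]
      · rw [if_neg h, if_neg h]
        simp
    rw [Finset.sum_congr rfl fun g _ => hterm g, ← Finset.mul_sum, smul_eq_mul, ← mul_assoc,
      ENNReal.inv_mul_cancel (ENNReal.ofReal_pos.mpr (hpipos i)).ne'
        ENNReal.ofReal_ne_top, one_mul,
      ← ENNReal.ofReal_sum_of_nonneg (fun g _ => by
        by_cases h : Stmt4Aux.root g = i
        · rw [if_pos h]
          exact mul_nonneg (Real.exp_nonneg _) (Stmt4Aux.wt_nonneg hM0 g)
        · rw [if_neg h]),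
      Stmt4Aux.Z_eq]
  rw [main]
  exact ENNReal.ofReal_le_ofReal (hZle n i ζ (le_of_lt hζ))
end

section
/- (Exponential moment of the square) Assume bλ² > 1. Then there exist ζ̃ = ζ̃(M) ∈ (0, ∞) and C̃ = C̃(M) < ∞ such that for all n ≥ 0, all i ∈ [k], and all ζ ∈ (−ζ̃, ζ̃), E[e^{ζ S_n²} | ξ_ρ = i] ≤ C̃ < ∞. -/
set_option maxHeartbeats 1000000
open MeasureTheory ProbabilityTheory Finset
open scoped ENNReal

lemma exp_le_add_exp_sq (x : ℝ) : Real.exp x ≤ x + Real.exp (x^2) := by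
  rcases le_or_gt (|x|) 1 with hx | hx
  · have h := Real.exp_bound hx (n := 2) (by norm_num)
    have h2 : Real.exp x - (1 + x) ≤ |x|^2 * (3/4) := by
      have := abs_le.1 h
      have e : ∑ i ∈ Finset.range 2, x ^ i / (Nat.factorial i) = 1 + x := by
        simp [Finset.sum_range_succ]
      have : Real.exp x - (1 + x) ≤ |x| ^ 2 * ((2:ℕ).succ / ((Nat.factorial 2) * 2)) := by
        rw [← e]; exact le_trans (le_abs_self _) h
      calc Real.exp x - (1 + x) ≤ |x| ^ 2 * ((2:ℕ).succ / ((Nat.factorial 2) * 2)) := this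
        _ = |x|^2 * (3/4) := by norm_num [Nat.factorial]
    have h3 : Real.exp x ≤ 1 + x + x^2 := by
      have : |x|^2 = x^2 := sq_abs x
      nlinarith [sq_nonneg x]
    have h4 : (1:ℝ) + x^2 ≤ Real.exp (x^2) := by
      have := Real.add_one_le_exp (x^2); linarith
    linarith
  · rcases le_or_gt 0 x with hx0 | hx0
    · have hxx : x ≤ x^2 := by nlinarith [abs_of_nonneg hx0]
      have := Real.exp_le_exp.2 hxx
      linarith
    · have h1 : Real.exp x ≤ 1 := Real.exp_le_one_iff.2 (le_of_lt hx0)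
      have h4 : (1:ℝ) + x^2 ≤ Real.exp (x^2) := by
        have := Real.add_one_le_exp (x^2); linarith
      have : 1 ≤ x + 1 + x^2 := by nlinarith [abs_of_neg hx0]
      linarith

lemma hoeff_sub {k : ℕ} (M : Matrix (Fin k) (Fin k) ℝ) (ν : Fin k → ℝ) (lam V : ℝ)
    (hM0 : ∀ i j, 0 ≤ M i j) (hM1 : ∀ i, ∑ j, M i j = 1)
    (heig : ∀ i, ∑ j, M i j * ν j = lam * ν i)
    (hV : ∀ j, |ν j| ≤ V) (hlam : |lam| ≤ 1) (i : Fin k) (u : ℝ) :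
    ∑ j, M i j * Real.exp (ν j * u) ≤ Real.exp (lam * ν i * u + 4 * V^2 * u^2) := by
  set d : Fin k → ℝ := fun j => ν j - lam * ν i with hd
  have hdle : ∀ j, (d j * u)^2 ≤ 4 * V^2 * u^2 := by
    intro j
    have h1 : |d j| ≤ 2 * V := by
      have := hV j; have := hV i
      have : |lam * ν i| ≤ V := by
        rw [abs_mul]
        calc |lam| * |ν i| ≤ 1 * V := by
              apply mul_le_mul hlam (hV i) (abs_nonneg _) zero_le_one
          _ = V := one_mul V
      calc |d j| ≤ |ν j| + |lam * ν i| := abs_sub _ _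
        _ ≤ V + V := add_le_add (hV j) this
        _ = 2 * V := by ring
    have h2 : (d j * u)^2 = (d j)^2 * u^2 := by ring
    have h3 : (d j)^2 ≤ (2*V)^2 := by
      rw [← sq_abs (d j)]
      exact pow_le_pow_left₀ (abs_nonneg _) h1 2
    nlinarith [sq_nonneg u]
  have key : ∀ j, Real.exp (ν j * u) ≤ Real.exp (lam * ν i * u) * (d j * u + Real.exp (4*V^2*u^2)) := by
    intro j
    have : ν j * u = lam * ν i * u + d j * u := by rw [hd]; ring
    rw [this, Real.exp_add]
    apply mul_le_mul_of_nonneg_left _ (Real.exp_nonneg _)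
    calc Real.exp (d j * u) ≤ d j * u + Real.exp ((d j * u)^2) := exp_le_add_exp_sq _
      _ ≤ d j * u + Real.exp (4*V^2*u^2) := by
          gcongr; exact hdle j
  calc ∑ j, M i j * Real.exp (ν j * u)
      ≤ ∑ j, M i j * (Real.exp (lam * ν i * u) * (d j * u + Real.exp (4*V^2*u^2))) := by
        apply Finset.sum_le_sum; intro j _
        exact mul_le_mul_of_nonneg_left (key j) (hM0 i j)
    _ = Real.exp (lam * ν i * u) * (u * (∑ j, M i j * d j) + Real.exp (4*V^2*u^2) * (∑ j, M i j)) := by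
        simp only [Finset.mul_sum, ← Finset.sum_add_distrib]
        apply Finset.sum_congr rfl; intro j _; ring
    _ = Real.exp (lam * ν i * u) * Real.exp (4*V^2*u^2) := by
        have : ∑ j, M i j * d j = 0 := by
          simp only [hd, mul_sub]
          rw [Finset.sum_sub_distrib, heig i, ← Finset.sum_mul, hM1 i]; ring
        rw [this, hM1 i]; ring
    _ = Real.exp (lam * ν i * u + 4*V^2*u^2) := (Real.exp_add _ _).symm

abbrev Hist (b k n : ℕ) : Type := ∀ m : Fin (n+1), (Fin (m:ℕ) → Fin b) → Fin k

def hroot {b k n : ℕ} (h : Hist b k n) : Fin k := h ⟨0, n.succ_pos⟩ Fin.elim0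

def hget {b k n : ℕ} (h : Hist b k n) (m : ℕ) : (Fin m → Fin b) → Fin k :=
  if hm : m < n+1 then h ⟨m, hm⟩ else fun _ => hroot h

def hweight {b k n : ℕ} (M : Matrix (Fin k) (Fin k) ℝ) (h : Hist b k n) : ℝ :=
  ∏ m ∈ Finset.range n, ∏ x : Fin (m+1) → Fin b,
    M (hget h m (x ∘ Fin.castSucc)) (hget h (m+1) x)

def hleaf {b k n : ℕ} (ν : Fin k → ℝ) (h : Hist b k n) : ℝ :=
  ∑ x : Fin n → Fin b, ν (hget h n x)

noncomputable def Tfun {b k : ℕ} (M : Matrix (Fin k) (Fin k) ℝ) (ν : Fin k → ℝ)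
    (n : ℕ) (i : Fin k) (u : ℝ) : ℝ :=
  ∑ h : Hist b k n, if hroot h = i then hweight M h * Real.exp (u * hleaf ν h) else 0

def histCons {b k n : ℕ} (i : Fin k) (g : Fin b → Hist b k n) : Hist b k (n+1) :=
  fun m => match m with
  | ⟨0, _⟩ => fun _ => i
  | ⟨m'+1, hm⟩ => fun x => g (x ⟨0, Nat.succ_pos _⟩) ⟨m', Nat.lt_of_succ_lt_succ hm⟩
      (fun j => x j.succ)

lemma hroot_histCons {b k n : ℕ} (i : Fin k) (g : Fin b → Hist b k n) :
    hroot (histCons i g) = i := rfl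

lemma hget_zero_eq_root {b k n : ℕ} (h : Hist b k n) (y : Fin 0 → Fin b) :
    hget h 0 y = hroot h := by
  rw [hget, dif_pos n.succ_pos, hroot]
  exact congrArg _ (funext fun j => j.elim0)

lemma hget_histCons_zero {b k n : ℕ} (i : Fin k) (g : Fin b → Hist b k n)
    (y : Fin 0 → Fin b) : hget (histCons i g) 0 y = i := by
  rw [hget, dif_pos (Nat.succ_pos _)]; rfl

lemma hget_histCons_succ {b k n : ℕ} (i : Fin k) (g : Fin b → Hist b k n)
    (m : ℕ) (hm : m < n + 1) (x : Fin (m+1) → Fin b) :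
    hget (histCons i g) (m+1) x
      = hget (g (x ⟨0, Nat.succ_pos _⟩)) m (fun j => x j.succ) := by
  rw [hget, hget, dif_pos (by omega : m + 1 < n + 1 + 1), dif_pos hm]
  rfl

lemma prod_fun_one {b : ℕ} (F : Fin b → ℝ) :
    (∏ x : Fin 1 → Fin b, F (x ⟨0, Nat.one_pos⟩)) = ∏ t : Fin b, F t := by
  apply Fintype.prod_equiv (Equiv.funUnique (Fin 1) (Fin b))
  intro x
  rfl

lemma prod_cons_split {b m : ℕ} (Q : Fin b → (Fin m → Fin b) → ℝ) :
    (∏ x : Fin (m+1) → Fin b, Q (x ⟨0, Nat.succ_pos _⟩) (fun j => x j.succ))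
      = ∏ t : Fin b, ∏ y : Fin m → Fin b, Q t y := by
  have h1 : (∏ p : Fin b × (Fin m → Fin b), Q p.1 p.2)
      = ∏ x : Fin (m+1) → Fin b, Q (x ⟨0, Nat.succ_pos _⟩) (fun j => x j.succ) := by
    apply Fintype.prod_equiv (Fin.consEquiv (fun _ : Fin (m+1) => Fin b))
    intro p
    simp [Fin.consEquiv]
  rw [← h1, Fintype.prod_prod_type]

lemma sum_cons_split {b m : ℕ} (Q : Fin b → (Fin m → Fin b) → ℝ) :
    (∑ x : Fin (m+1) → Fin b, Q (x ⟨0, Nat.succ_pos _⟩) (fun j => x j.succ))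
      = ∑ t : Fin b, ∑ y : Fin m → Fin b, Q t y := by
  have h1 : (∑ p : Fin b × (Fin m → Fin b), Q p.1 p.2)
      = ∑ x : Fin (m+1) → Fin b, Q (x ⟨0, Nat.succ_pos _⟩) (fun j => x j.succ) := by
    apply Fintype.sum_equiv (Fin.consEquiv (fun _ : Fin (m+1) => Fin b))
    intro p
    simp [Fin.consEquiv]
  rw [← h1, Fintype.sum_prod_type]

lemma hweight_histCons {b k n : ℕ} (M : Matrix (Fin k) (Fin k) ℝ)
    (i : Fin k) (g : Fin b → Hist b k n) :
    hweight M (histCons i g)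
      = (∏ t, M i (hroot (g t))) * ∏ t, hweight M (g t) := by
  rw [hweight, Finset.prod_range_succ', mul_comm]
  congr 1
  · -- level-0 factor
    have e1 : ∀ x : Fin 1 → Fin b,
        M (hget (histCons i g) 0 (x ∘ Fin.castSucc)) (hget (histCons i g) (0+1) x)
          = M i (hroot (g (x ⟨0, Nat.one_pos⟩))) := by
      intro x
      rw [hget_histCons_zero, hget_histCons_succ _ _ 0 n.succ_pos, hget_zero_eq_root]
    rw [Finset.prod_congr rfl (fun x _ => e1 x)]
    exact prod_fun_one (fun t => M i (hroot (g t)))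
  · -- deeper levels
    have e2 : ∀ m ∈ Finset.range n, ∀ x : Fin (m+2) → Fin b,
        M (hget (histCons i g) (m+1) (x ∘ Fin.castSucc)) (hget (histCons i g) (m+1+1) x)
          = M (hget (g (x ⟨0, Nat.succ_pos _⟩)) m ((fun j => x j.succ) ∘ Fin.castSucc))
              (hget (g (x ⟨0, Nat.succ_pos _⟩)) (m+1) (fun j => x j.succ)) := by
      intro m hm x
      rw [Finset.mem_range] at hm
      rw [hget_histCons_succ _ _ m (by omega) (x ∘ Fin.castSucc),
          hget_histCons_succ _ _ (m+1) (by omega) x]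
      rfl
    calc (∏ m ∈ Finset.range n, ∏ x : Fin (m+1+1) → Fin b,
            M (hget (histCons i g) (m+1) (x ∘ Fin.castSucc)) (hget (histCons i g) (m+1+1) x))
        = ∏ m ∈ Finset.range n, ∏ t : Fin b, ∏ y : Fin (m+1) → Fin b,
            M (hget (g t) m (y ∘ Fin.castSucc)) (hget (g t) (m+1) y) := by
          apply Finset.prod_congr rfl
          intro m hm
          rw [Finset.prod_congr rfl (fun x _ => e2 m hm x)]
          exact prod_cons_split (fun t y =>
            M (hget (g t) m (y ∘ Fin.castSucc)) (hget (g t) (m+1) y))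
      _ = ∏ t : Fin b, hweight M (g t) := by
          rw [Finset.prod_comm]
          rfl

lemma hleaf_histCons {b k n : ℕ} (ν : Fin k → ℝ) (i : Fin k) (g : Fin b → Hist b k n) :
    hleaf ν (histCons i g) = ∑ t, hleaf ν (g t) := by
  rw [hleaf]
  have e1 : ∀ x : Fin (n+1) → Fin b,
      ν (hget (histCons i g) (n+1) x)
        = ν (hget (g (x ⟨0, Nat.succ_pos _⟩)) n (fun j => x j.succ)) := by
    intro x
    rw [hget_histCons_succ _ _ n (by omega) x]
  rw [Finset.sum_congr rfl (fun x _ => e1 x)]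
  exact sum_cons_split (fun t y => ν (hget (g t) n y))

lemma histCons_bijective {b k n : ℕ} :
    Function.Bijective (fun p : Fin k × (Fin b → Hist b k n) => histCons p.1 p.2) := by
  constructor
  · rintro ⟨r, g⟩ ⟨r', g'⟩ hE
    simp only [Prod.mk.injEq]
    have hr : r = r' := by
      have := congrFun (congrFun hE ⟨0, Nat.succ_pos _⟩) Fin.elim0
      exact this
    refine ⟨hr, ?_⟩
    funext t m y
    have := congrFun (congrFun hE ⟨(m : ℕ) + 1, by omega⟩) (Fin.cons t y)
    simpa [histCons, Fin.cons_zero, Fin.cons_succ, Fin.eta] using this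
  · intro H
    refine ⟨⟨hroot H, fun t => fun m y => H ⟨(m : ℕ) + 1, by omega⟩ (Fin.cons t y)⟩, ?_⟩
    funext m x
    rcases m with ⟨mv, hm⟩
    rcases mv with _ | mv'
    · show hroot H = H ⟨0, hm⟩ x
      rw [hroot]
      congr 1
      exact funext fun j => j.elim0
    · show H ⟨mv' + 1, _⟩ (Fin.cons (x ⟨0, Nat.succ_pos _⟩) (fun j => x j.succ)) = H ⟨mv' + 1, hm⟩ x
      congr 1
      have : (fun j => x j.succ) = Fin.tail x := rfl
      rw [this]
      have h0 : x ⟨0, Nat.succ_pos _⟩ = x 0 := by congr 1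
      rw [h0, Fin.cons_self_tail]

lemma Tfun_zero {b k : ℕ} (M : Matrix (Fin k) (Fin k) ℝ) (ν : Fin k → ℝ)
    (i : Fin k) (u : ℝ) :
    Tfun (b := b) M ν 0 i u = Real.exp (u * ν i) := by
  have hbij : Function.Bijective (fun j : Fin k => (fun _ _ => j : Hist b k 0)) := by
    constructor
    · intro j j' hE
      exact congrFun (congrFun hE ⟨0, Nat.one_pos⟩) Fin.elim0
    · intro h
      refine ⟨hroot h, ?_⟩
      funext m x
      rcases m with ⟨mv, hm⟩
      interval_cases mv
      show hroot h = h ⟨0, hm⟩ x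
      rw [hroot]
      congr 1
      exact funext fun j => j.elim0
  rw [Tfun, ← Fintype.sum_bijective _ hbij
    (fun j => if j = i then hweight M (fun _ _ => j : Hist b k 0)
      * Real.exp (u * hleaf ν (fun _ _ => j : Hist b k 0)) else 0) _ (fun j => rfl)]
  have hw : ∀ j : Fin k, hweight M (fun _ _ => j : Hist b k 0) = 1 := fun j => rfl
  have hl : ∀ j : Fin k, hleaf ν (fun _ _ => j : Hist b k 0) = ν j := by
    intro j
    rw [hleaf]
    rw [Fintype.sum_unique]
    rfl
  simp only [hw, hl, one_mul]
  rw [Finset.sum_ite_eq' Finset.univ i (fun j => Real.exp (u * ν j))]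
  simp

lemma Tfun_succ {b k : ℕ} (M : Matrix (Fin k) (Fin k) ℝ) (ν : Fin k → ℝ)
    (n : ℕ) (i : Fin k) (u : ℝ) :
    Tfun (b := b) M ν (n+1) i u = (∑ j, M i j * Tfun (b := b) M ν n j u) ^ b := by
  have hG : (∑ j, M i j * Tfun (b := b) M ν n j u)
      = ∑ h : Hist b k n, M i (hroot h) * (hweight M h * Real.exp (u * hleaf ν h)) := by
    simp only [Tfun, Finset.mul_sum, mul_ite, mul_zero]
    rw [Finset.sum_comm]
    apply Finset.sum_congr rfl
    intro h _
    have : ∀ j : Fin k, (if hroot h = j then M i j * (hweight M h * Real.exp (u * hleaf ν h)) else 0)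
        = (if hroot h = j then M i j * (hweight M h * Real.exp (u * hleaf ν h)) else 0) := fun _ => rfl
    rw [Finset.sum_ite_eq Finset.univ (hroot h)
      (fun j => M i j * (hweight M h * Real.exp (u * hleaf ν h)))]
    simp
  rw [hG, Fintype.sum_pow]
  rw [Tfun, ← Fintype.sum_bijective _ (histCons_bijective (b := b) (k := k) (n := n))
    (fun p => if p.1 = i then hweight M (histCons p.1 p.2)
      * Real.exp (u * hleaf ν (histCons p.1 p.2)) else 0) _
    (fun p => by rw [hroot_histCons])]
  rw [Fintype.sum_prod_type]
  have hcollapse : ∀ r : Fin k,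
      (∑ g : Fin b → Hist b k n, if r = i then hweight M (histCons r g)
        * Real.exp (u * hleaf ν (histCons r g)) else 0)
      = if r = i then (∑ g : Fin b → Hist b k n, hweight M (histCons r g)
        * Real.exp (u * hleaf ν (histCons r g))) else 0 := by
    intro r
    by_cases hr : r = i <;> simp [hr]
  rw [Finset.sum_congr rfl (fun r _ => hcollapse r),
    Finset.sum_ite_eq' Finset.univ i]
  simp only [Finset.mem_univ, if_true]
  apply Finset.sum_congr rfl
  intro g _
  rw [hweight_histCons, hleaf_histCons, Finset.mul_sum, Real.exp_sum,
    ← Finset.prod_mul_distrib, ← Finset.prod_mul_distrib]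
  exact Finset.prod_congr rfl (fun t _ => by ring)

lemma hweight_nonneg {b k n : ℕ} (M : Matrix (Fin k) (Fin k) ℝ)
    (hM0 : ∀ i j, 0 ≤ M i j) (h : Hist b k n) : 0 ≤ hweight M h := by
  apply Finset.prod_nonneg; intro m _
  apply Finset.prod_nonneg; intro x _
  exact hM0 _ _

lemma Tfun_nonneg {b k : ℕ} (M : Matrix (Fin k) (Fin k) ℝ) (ν : Fin k → ℝ)
    (hM0 : ∀ i j, 0 ≤ M i j) (n : ℕ) (i : Fin k) (u : ℝ) :
    0 ≤ Tfun (b := b) M ν n i u := by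
  apply Finset.sum_nonneg; intro h _
  by_cases hr : hroot h = i <;> simp [hr]
  exact mul_nonneg (hweight_nonneg M hM0 h) (Real.exp_nonneg _)

lemma Tfun_le {b k : ℕ} (M : Matrix (Fin k) (Fin k) ℝ) (ν : Fin k → ℝ) (lam V c : ℝ)
    (hM0 : ∀ i j, 0 ≤ M i j) (hM1 : ∀ i, ∑ j, M i j = 1)
    (heig : ∀ i, ∑ j, M i j * ν j = lam * ν i)
    (hV : ∀ j, |ν j| ≤ V) (hlam : |lam| ≤ 1) (hc : 0 ≤ c)
    (hc2 : c + 4 * V^2 ≤ c * ((b:ℝ) * lam^2)) :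
    ∀ n (i : Fin k) (u : ℝ), Tfun (b := b) M ν n i u
      ≤ Real.exp (ν i * (((b:ℝ)*lam)^n * u) + c * (((b:ℝ)*lam)^n * u)^2) := by
  intro n
  induction n with
  | zero =>
    intro i u
    rw [Tfun_zero]
    apply Real.exp_le_exp.2
    rw [pow_zero]
    nlinarith [sq_nonneg u, mul_nonneg hc (sq_nonneg u)]
  | succ n ih =>
    intro i u
    rw [Tfun_succ]
    set β : ℝ := ((b:ℝ)*lam)^n with hβ
    have hsum_le : (∑ j, M i j * Tfun (b := b) M ν n j u)
        ≤ Real.exp (lam * ν i * (β * u) + (c + 4*V^2) * (β * u)^2) := by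
      calc (∑ j, M i j * Tfun (b := b) M ν n j u)
          ≤ ∑ j, M i j * Real.exp (ν j * (β * u) + c * (β * u)^2) := by
            apply Finset.sum_le_sum; intro j _
            exact mul_le_mul_of_nonneg_left (ih j u) (hM0 i j)
        _ = Real.exp (c * (β * u)^2) * ∑ j, M i j * Real.exp (ν j * (β * u)) := by
            rw [Finset.mul_sum]
            apply Finset.sum_congr rfl; intro j _
            rw [Real.exp_add]; ring
        _ ≤ Real.exp (c * (β * u)^2) * Real.exp (lam * ν i * (β * u) + 4*V^2*(β * u)^2) := by
            apply mul_le_mul_of_nonneg_left _ (Real.exp_nonneg _)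
            exact hoeff_sub M ν lam V hM0 hM1 heig hV hlam i (β * u)
        _ = Real.exp (lam * ν i * (β * u) + (c + 4*V^2) * (β * u)^2) := by
            rw [← Real.exp_add]; ring_nf
    have hnn : 0 ≤ ∑ j, M i j * Tfun (b := b) M ν n j u :=
      Finset.sum_nonneg fun j _ => mul_nonneg (hM0 i j) (Tfun_nonneg M ν hM0 n j u)
    calc (∑ j, M i j * Tfun (b := b) M ν n j u) ^ b
        ≤ (Real.exp (lam * ν i * (β * u) + (c + 4*V^2) * (β * u)^2)) ^ b :=
          pow_le_pow_left₀ hnn hsum_le b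
      _ = Real.exp ((b:ℝ) * (lam * ν i * (β * u) + (c + 4*V^2) * (β * u)^2)) :=
          (Real.exp_nat_mul _ b).symm
      _ ≤ Real.exp (ν i * ((β * ((b:ℝ)*lam)) * u) + c * ((β * ((b:ℝ)*lam)) * u)^2) := by
          apply Real.exp_le_exp.2
          have hb0 : (0:ℝ) ≤ (b:ℝ) := Nat.cast_nonneg b
          have hq : (b:ℝ) * (c + 4*V^2) ≤ c * (b:ℝ)^2 * lam^2 := by nlinarith
          have h2 : (b:ℝ) * ((c + 4*V^2) * (β * u)^2) ≤ c * ((β * ((b:ℝ) * lam)) * u)^2 := by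
            have he : ((β * ((b:ℝ) * lam)) * u)^2 = (b:ℝ)^2 * lam^2 * (β*u)^2 := by ring
            rw [he]
            nlinarith [sq_nonneg (β * u)]
          nlinarith [h2]
      _ = Real.exp (ν i * (((b:ℝ)*lam)^(n+1) * u) + c * (((b:ℝ)*lam)^(n+1) * u)^2) := by
          rw [hβ, ← pow_succ]

section meas
variable {Ω : Type*} [MeasurableSpace Ω] {b k : ℕ}
  (ξ : (n : ℕ) → (Fin n → Fin b) → Ω → Fin k)

def Aset (n : ℕ) (h : Hist b k n) : Set Ω :=
  {ω | ∀ m : Fin (n+1), ∀ x : Fin (m:ℕ) → Fin b, ξ (m:ℕ) x ω = h m x}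

lemma measurable_Aset (hmeas : ∀ n x, Measurable (ξ n x)) (n : ℕ) (h : Hist b k n) :
    MeasurableSet (Aset ξ n h) := by
  have : Aset ξ n h = ⋂ m : Fin (n+1), ⋂ x : Fin (m:ℕ) → Fin b,
      (ξ (m:ℕ) x) ⁻¹' {h m x} := by
    ext ω; simp [Aset, Set.mem_iInter]
  rw [this]
  exact MeasurableSet.iInter fun m => MeasurableSet.iInter fun x =>
    (hmeas _ _) (measurableSet_singleton _)

lemma mem_Aset_iff (n : ℕ) (h : Hist b k n) (ω : Ω) :
    ω ∈ Aset ξ n h ↔ h = (fun m x => ξ (m:ℕ) x ω : Hist b k n) := by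
  constructor
  · intro H; funext m x; exact (H m x).symm
  · intro H; intro m x; rw [H]

lemma measure_Aset (μ : Measure Ω) (M : Matrix (Fin k) (Fin k) ℝ) (pi : Fin k → ℝ)
    (hmarkov : ∀ n (f : (m : ℕ) → (Fin m → Fin b) → Fin k),
      μ {ω | ∀ m, m ≤ n → ∀ x : Fin m → Fin b, ξ m x ω = f m x}
        = ENNReal.ofReal (pi (f 0 Fin.elim0) *
            ∏ m ∈ Finset.range n, ∏ x : Fin (m + 1) → Fin b,
              M (f m (x ∘ Fin.castSucc)) (f (m + 1) x)))
    (n : ℕ) (h : Hist b k n) :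
    μ (Aset ξ n h) = ENNReal.ofReal (pi (hroot h) * hweight M h) := by
  rw [hweight]
  have hset : {ω | ∀ m, m ≤ n → ∀ x : Fin m → Fin b, ξ m x ω = hget h m x}
      = Aset ξ n h := by
    ext ω
    constructor
    · intro H m x
      have h1 := H (m:ℕ) (by omega) x
      rw [hget, dif_pos m.isLt] at h1
      exact h1
    · intro H m hm x
      have h2 := H ⟨m, by omega⟩ x
      rw [hget, dif_pos (by omega : m < n+1)]
      exact h2
  have := hmarkov n (hget h)
  rw [hset] at this
  rw [this, hget_zero_eq_root]


lemma pointwise_decomp (n : ℕ) (φ : ((Fin n → Fin b) → Fin k) → ℝ≥0∞) (ω : Ω) :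
    φ (fun x => ξ n x ω)
      = ∑ h : Hist b k n, (Aset ξ n h).indicator (fun _ => φ (hget h n)) ω := by
  classical
  set h₀ : Hist b k n := fun m x => ξ (m:ℕ) x ω with hh₀
  rw [Finset.sum_eq_single h₀]
  · have hmem : ω ∈ Aset ξ n h₀ := fun m x => rfl
    rw [Set.indicator_of_mem hmem]
    congr 1
    rw [hget, dif_pos n.lt_succ_self]
  · intro h _ hne
    apply Set.indicator_of_notMem
    intro hmem
    apply hne
    funext m x
    exact (hmem m x).symm
  · intro habs
    exact absurd (Finset.mem_univ h₀) habs

lemma lint_decomp (μ : Measure Ω) (hmeas : ∀ n x, Measurable (ξ n x)) (n : ℕ)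
    (φ : ((Fin n → Fin b) → Fin k) → ℝ≥0∞) (i : Fin k) :
    ∫⁻ ω, φ (fun x => ξ n x ω) ∂(μ.restrict {ω | ξ 0 Fin.elim0 ω = i})
      = ∑ h : Hist b k n, if hroot h = i then φ (hget h n) * μ (Aset ξ n h) else 0 := by
  classical
  have hAm := fun h => measurable_Aset ξ hmeas n h
  calc ∫⁻ ω, φ (fun x => ξ n x ω) ∂(μ.restrict {ω | ξ 0 Fin.elim0 ω = i})
      = ∫⁻ ω, (∑ h : Hist b k n, (Aset ξ n h).indicator (fun _ => φ (hget h n)) ω)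
          ∂(μ.restrict {ω | ξ 0 Fin.elim0 ω = i}) := by
        apply lintegral_congr
        intro ω
        exact pointwise_decomp ξ n φ ω
    _ = ∑ h : Hist b k n, ∫⁻ ω, (Aset ξ n h).indicator (fun _ => φ (hget h n)) ω
          ∂(μ.restrict {ω | ξ 0 Fin.elim0 ω = i}) := by
        apply lintegral_finset_sum
        intro h _
        exact (measurable_const).indicator (hAm h)
    _ = ∑ h : Hist b k n, if hroot h = i then φ (hget h n) * μ (Aset ξ n h) else 0 := by
        apply Finset.sum_congr rfl
        intro h _
        rw [lintegral_indicator (hAm h), setLIntegral_const,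
          Measure.restrict_apply (hAm h)]
        by_cases hr : hroot h = i
        · rw [if_pos hr]
          have : Aset ξ n h ∩ {ω | ξ 0 Fin.elim0 ω = i} = Aset ξ n h := by
            apply Set.inter_eq_self_of_subset_left
            intro ω hω
            have h1 := hω ⟨0, n.succ_pos⟩ Fin.elim0
            show ξ 0 Fin.elim0 ω = i
            rw [h1]
            exact hr
          rw [this]
        · rw [if_neg hr]
          have : Aset ξ n h ∩ {ω | ξ 0 Fin.elim0 ω = i} = ∅ := by
            ext ω
            simp only [Set.mem_inter_iff, Set.mem_empty_iff_false, iff_false, not_and]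
            intro hω hi
            apply hr
            have h1 := hω ⟨0, n.succ_pos⟩ Fin.elim0
            exact h1.symm.trans hi
          rw [this]
          simp



lemma measure_root (μ : Measure Ω) (M : Matrix (Fin k) (Fin k) ℝ) (pi : Fin k → ℝ)
    (hmarkov : ∀ n (f : (m : ℕ) → (Fin m → Fin b) → Fin k),
      μ {ω | ∀ m, m ≤ n → ∀ x : Fin m → Fin b, ξ m x ω = f m x}
        = ENNReal.ofReal (pi (f 0 Fin.elim0) *
            ∏ m ∈ Finset.range n, ∏ x : Fin (m + 1) → Fin b,
              M (f m (x ∘ Fin.castSucc)) (f (m + 1) x)))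
    (i : Fin k) :
    μ {ω | ξ 0 Fin.elim0 ω = i} = ENNReal.ofReal (pi i) := by
  have h := hmarkov 0 (fun _ _ => i)
  simp only [Finset.range_zero, Finset.prod_empty, mul_one] at h
  have hset : {ω | ∀ m, m ≤ 0 → ∀ x : Fin m → Fin b, ξ m x ω = (fun _ _ => i) m x}
      = {ω | ξ 0 Fin.elim0 ω = i} := by
    ext ω
    constructor
    · intro H
      exact H 0 le_rfl Fin.elim0
    · intro H m hm x
      interval_cases m
      have hx : x = Fin.elim0 := funext fun j => j.elim0
      rw [hx]
      exact H
  rw [hset] at h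
  exact h

lemma mgf_bound (μ : Measure Ω) (M : Matrix (Fin k) (Fin k) ℝ) (pi : Fin k → ℝ)
    (ν : Fin k → ℝ) (lam V c : ℝ) (S : ℕ → Ω → ℝ)
    (hmeas : ∀ n x, Measurable (ξ n x))
    (hmarkov : ∀ n (f : (m : ℕ) → (Fin m → Fin b) → Fin k),
      μ {ω | ∀ m, m ≤ n → ∀ x : Fin m → Fin b, ξ m x ω = f m x}
        = ENNReal.ofReal (pi (f 0 Fin.elim0) *
            ∏ m ∈ Finset.range n, ∏ x : Fin (m + 1) → Fin b,
              M (f m (x ∘ Fin.castSucc)) (f (m + 1) x)))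
    (hS : ∀ n ω, S n ω = (((b : ℝ) * lam) ^ n)⁻¹ * ∑ x : Fin n → Fin b, ν (ξ n x ω))
    (hpipos : ∀ i, 0 < pi i)
    (hM0 : ∀ i j, 0 ≤ M i j) (hM1 : ∀ i, ∑ j, M i j = 1)
    (heig : ∀ i, ∑ j, M i j * ν j = lam * ν i)
    (hV : ∀ j, |ν j| ≤ V) (hlam : |lam| ≤ 1) (hc : 0 ≤ c)
    (hc2 : c + 4 * V^2 ≤ c * ((b:ℝ) * lam^2))
    (hbne : ((b:ℝ) * lam) ≠ 0)
    (n : ℕ) (i : Fin k) (θ : ℝ) :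
    ∫⁻ ω, ENNReal.ofReal (Real.exp (θ * S n ω)) ∂(μ[|{ω | ξ 0 Fin.elim0 ω = i}])
      ≤ ENNReal.ofReal (Real.exp (ν i * θ + c * θ^2)) := by
  classical
  set u : ℝ := θ * ((((b:ℝ)*lam)^n)⁻¹) with hu
  set φ : ((Fin n → Fin b) → Fin k) → ℝ≥0∞ :=
    fun L => ENNReal.ofReal (Real.exp (u * ∑ x : Fin n → Fin b, ν (L x))) with hφ
  have hβne : (((b:ℝ)*lam)^n) ≠ 0 := pow_ne_zero _ hbne
  have hβu : (((b:ℝ)*lam)^n) * u = θ := by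
    rw [hu]; field_simp
  have hfun : (fun ω => ENNReal.ofReal (Real.exp (θ * S n ω)))
      = fun ω => φ (fun x => ξ n x ω) := by
    funext ω
    rw [hφ, hS n ω]
    congr 2
    rw [hu]; ring
  have hμs := measure_root ξ μ M pi hmarkov i
  have hs0 : μ {ω | ξ 0 Fin.elim0 ω = i} ≠ 0 := by
    rw [hμs]
    simp [ENNReal.ofReal_eq_zero, not_le, hpipos i]
  have hsT : μ {ω | ξ 0 Fin.elim0 ω = i} ≠ ⊤ := by
    rw [hμs]; exact ENNReal.ofReal_ne_top
  rw [ProbabilityTheory.cond, lintegral_smul_measure, hfun,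
    lint_decomp ξ μ hmeas n φ i]
  have hterm : ∀ h : Hist b k n,
      (if hroot h = i then φ (hget h n) * μ (Aset ξ n h) else 0)
      = ENNReal.ofReal (pi i) * ENNReal.ofReal
          (if hroot h = i then hweight M h * Real.exp (u * hleaf ν h) else 0) := by
    intro h
    by_cases hr : hroot h = i
    · rw [if_pos hr, if_pos hr, measure_Aset ξ μ M pi hmarkov n h, hr]
      have hφh : φ (hget h n) = ENNReal.ofReal (Real.exp (u * hleaf ν h)) := rfl
      rw [hφh, ← ENNReal.ofReal_mul (Real.exp_nonneg _)]
      rw [← ENNReal.ofReal_mul (hpipos i).le]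
      congr 1
      ring
    · rw [if_neg hr, if_neg hr]
      simp
  rw [Finset.sum_congr rfl (fun h _ => hterm h), ← Finset.mul_sum,
    ← ENNReal.ofReal_sum_of_nonneg]
  · rw [hμs, smul_eq_mul, ← mul_assoc,
      ENNReal.inv_mul_cancel (ENNReal.ofReal_pos.2 (hpipos i)).ne' ENNReal.ofReal_ne_top,
      one_mul]
    apply ENNReal.ofReal_le_ofReal
    have := Tfun_le M ν lam V c hM0 hM1 heig hV hlam hc hc2 n i u
    rw [hβu] at this
    exact this
  · intro h _
    by_cases hr : hroot h = i
    · rw [if_pos hr]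
      exact mul_nonneg (hweight_nonneg M hM0 h) (Real.exp_nonneg _)
    · rw [if_neg hr]
end meas

lemma quad_grid (z : ℝ) (hz : 0 < z) (s : ℝ) :
    ∃ m : ℕ, z * s^2 ≤ 1/(16*z) - (m:ℝ)^2/(4*z) + m * |s| := by
  set y : ℝ := 2*z*|s| with hy
  have hy0 : 0 ≤ y := by positivity
  have h3 : (0:ℤ) ≤ ⌊y + 1/2⌋ := Int.floor_nonneg.2 (by linarith)
  refine ⟨(⌊y + 1/2⌋).toNat, ?_⟩
  have h1 : ((⌊y+1/2⌋ : ℤ) : ℝ) ≤ y + 1/2 := Int.floor_le _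
  have h2 : y + 1/2 < ((⌊y+1/2⌋ : ℤ) : ℝ) + 1 := Int.lt_floor_add_one _
  have h4 : (((⌊y+1/2⌋).toNat : ℕ) : ℝ) = ((⌊y+1/2⌋ : ℤ) : ℝ) := by
    rw [← Int.toNat_of_nonneg h3]
    push_cast
    rw [Int.toNat_of_nonneg h3]
  rw [h4]
  set w : ℝ := ((⌊y+1/2⌋ : ℤ) : ℝ)
  have hw : (w - y)^2 ≤ 1/4 := by nlinarith
  have hexp : w^2 - 2*w*y + y^2 ≤ 1/4 := by nlinarith
  have hyv : y = 2*z*|s| := hy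
  have hs2 : |s|^2 = s^2 := sq_abs s
  have h4z : (0:ℝ) < 4 * z := by linarith
  have e1 : 1/(16*z) - w^2/(4*z) + w*|s| - z*|s|^2 = (1/4 - (w - y)^2)/(4*z) := by
    rw [hyv]
    field_simp
    ring
  have hpos : 0 ≤ (1/4 - (w - y)^2)/(4*z) := div_nonneg (by linarith) h4z.le
  rw [← hs2]
  linarith
theorem stmt_7
    {Ω : Type*} [MeasurableSpace Ω] (μ : Measure Ω) [IsProbabilityMeasure μ]
    (b k : ℕ) (hb : 2 ≤ b) (hk : 2 ≤ k)
    (M : Matrix (Fin k) (Fin k) ℝ) (pi : Fin k → ℝ) (lam : ℝ) (ν : Fin k → ℝ)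
    (hM0 : ∀ i j, 0 ≤ M i j) (hM1 : ∀ i, ∑ j, M i j = 1)
    (hMirr : ∀ i j, ∃ n : ℕ, 0 < (M ^ n) i j)
    (hpipos : ∀ i, 0 < pi i) (hpisum : ∑ i, pi i = 1)
    (hpistat : ∀ j, ∑ i, pi i * M i j = pi j)
    (heig : M.mulVec ν = lam • ν) (hν0 : ν ≠ 0)
    (hνnorm : ∑ i, pi i * ν i ^ 2 = 1)
    (hsecond : ∀ lam' : ℝ, lam' ≠ 1 →
      (∃ w : Fin k → ℝ, w ≠ 0 ∧ M.mulVec w = lam' • w) → |lam'| ≤ |lam|)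
    (ξ : (n : ℕ) → (Fin n → Fin b) → Ω → Fin k)
    (hmeas : ∀ n x, Measurable (ξ n x))
    (hmarkov : ∀ n (f : (m : ℕ) → (Fin m → Fin b) → Fin k),
      μ {ω | ∀ m, m ≤ n → ∀ x : Fin m → Fin b, ξ m x ω = f m x}
        = ENNReal.ofReal (pi (f 0 Fin.elim0) *
            ∏ m ∈ Finset.range n, ∏ x : Fin (m + 1) → Fin b,
              M (f m (x ∘ Fin.castSucc)) (f (m + 1) x)))
    (S : ℕ → Ω → ℝ)
    (hS : ∀ n ω, S n ω = (((b : ℝ) * lam) ^ n)⁻¹ * ∑ x : Fin n → Fin b, ν (ξ n x ω))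
    (hKS : 1 < (b : ℝ) * lam ^ 2)
    :
    ∃ ζt : ℝ, 0 < ζt ∧ ∃ Ct : ℝ,
      ∀ (n : ℕ) (i : Fin k) (ζ : ℝ), ζ ∈ Set.Ioo (-ζt) ζt →
        ∫⁻ ω, ENNReal.ofReal (Real.exp (ζ * (S n ω) ^ 2)) ∂(μ[|{ω | ξ 0 Fin.elim0 ω = i}])
          ≤ ENNReal.ofReal Ct := by
  classical
  have hk0 : Nonempty (Fin k) := ⟨⟨0, by omega⟩⟩
  -- eigen relation pointwise
  have heig' : ∀ i, ∑ j, M i j * ν j = lam * ν i := by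
    intro i
    have h1 := congrFun heig i
    simpa [Matrix.mulVec, dotProduct] using h1
  -- lam ≠ 0
  have hlamne : lam ≠ 0 := by
    intro h
    rw [h] at hKS
    norm_num at hKS
  have hbne : ((b:ℝ) * lam) ≠ 0 := by
    apply mul_ne_zero _ hlamne
    have : (0:ℝ) < b := by exact_mod_cast Nat.lt_of_lt_of_le (by norm_num) hb
    exact this.ne'
  -- V
  set V : ℝ := ∑ j, |ν j| with hVdef
  have hV : ∀ j, |ν j| ≤ V := fun j =>
    Finset.single_le_sum (f := fun j => |ν j|) (fun _ _ => abs_nonneg _) (Finset.mem_univ j)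
  have hV0 : 0 ≤ V := Finset.sum_nonneg fun _ _ => abs_nonneg _
  -- |lam| ≤ 1
  have hlam1 : |lam| ≤ 1 := by
    obtain ⟨i₀, _, hmax⟩ := Finset.exists_max_image Finset.univ (fun j => |ν j|)
      Finset.univ_nonempty
    have hνex : ∃ j, ν j ≠ 0 := by
      by_contra hcon
      push_neg at hcon
      exact hν0 (funext hcon)
    obtain ⟨j0, hj0⟩ := hνex
    have hpos : 0 < |ν i₀| :=
      lt_of_lt_of_le (abs_pos.2 hj0) (hmax j0 (Finset.mem_univ _))
    have hkey : |lam| * |ν i₀| ≤ 1 * |ν i₀| := by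
      rw [one_mul, ← abs_mul, ← heig' i₀]
      calc |∑ j, M i₀ j * ν j| ≤ ∑ j, |M i₀ j * ν j| := Finset.abs_sum_le_sum_abs _ _
        _ = ∑ j, M i₀ j * |ν j| := by
            apply Finset.sum_congr rfl
            intro j _
            rw [abs_mul, abs_of_nonneg (hM0 i₀ j)]
        _ ≤ ∑ j, M i₀ j * |ν i₀| := by
            apply Finset.sum_le_sum
            intro j _
            exact mul_le_mul_of_nonneg_left (hmax j (Finset.mem_univ _)) (hM0 i₀ j)
        _ = |ν i₀| := by rw [← Finset.sum_mul, hM1 i₀, one_mul]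
    exact le_of_mul_le_mul_right hkey hpos
  -- the constant c
  have hden : (0:ℝ) < (b:ℝ)*lam^2 - 1 := by linarith
  set c : ℝ := 4*V^2 / ((b:ℝ)*lam^2 - 1) with hcdef
  have hc : 0 ≤ c := div_nonneg (by positivity) hden.le
  have hc2 : c + 4*V^2 ≤ c * ((b:ℝ)*lam^2) := by
    have h1 : c * ((b:ℝ)*lam^2 - 1) = 4*V^2 := div_mul_cancel₀ _ hden.ne'
    nlinarith
  -- the grid constant
  have hcV2 : (0:ℝ) < c + V + 2 := by linarith
  set z : ℝ := 1/(4*(c+V+2)) with hzdef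
  have hz : 0 < z := by positivity
  set q : ℝ := 1/(16*z) with hqdef
  refine ⟨z, hz, 1 + 4*Real.exp q, ?_⟩
  intro n i ζ hζ
  set μ' := μ[|{ω | ξ 0 Fin.elim0 ω = i}] with hμ'def
  -- MGF bounds
  have MGF : ∀ θ : ℝ, ∫⁻ ω, ENNReal.ofReal (Real.exp (θ * S n ω)) ∂μ'
      ≤ ENNReal.ofReal (Real.exp (ν i * θ + c * θ^2)) := fun θ =>
    mgf_bound ξ μ M pi ν lam V c S hmeas hmarkov hS hpipos hM0 hM1 heig' hV hlam1 hc hc2 hbne n i θ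
  have hbd : ∀ m : ℕ, ∀ θ : ℝ, θ = (m:ℝ) ∨ θ = -(m:ℝ) →
      ν i * θ + c * θ^2 ≤ V*(m:ℝ) + c*(m:ℝ)^2 := by
    intro m θ hθ
    have h1 : |ν i| ≤ V := hV i
    have h2 : (0:ℝ) ≤ (m:ℝ) := Nat.cast_nonneg m
    rcases hθ with h | h <;> subst h
    · nlinarith [neg_abs_le (ν i), le_abs_self (ν i)]
    · nlinarith [neg_abs_le (ν i), le_abs_self (ν i)]
  have MGFp : ∀ m : ℕ, ∫⁻ ω, ENNReal.ofReal (Real.exp ((m:ℝ) * S n ω)) ∂μ'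
      ≤ ENNReal.ofReal (Real.exp (V*(m:ℝ) + c*(m:ℝ)^2)) := by
    intro m
    refine le_trans (MGF (m:ℝ)) (ENNReal.ofReal_le_ofReal (Real.exp_le_exp.2 ?_))
    exact hbd m _ (Or.inl rfl)
  have MGFm : ∀ m : ℕ, ∫⁻ ω, ENNReal.ofReal (Real.exp (-(m:ℝ) * S n ω)) ∂μ'
      ≤ ENNReal.ofReal (Real.exp (V*(m:ℝ) + c*(m:ℝ)^2)) := by
    intro m
    refine le_trans (MGF (-(m:ℝ))) (ENNReal.ofReal_le_ofReal (Real.exp_le_exp.2 ?_))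
    exact hbd m _ (Or.inr rfl)
  -- measurability of S n
  have hSmeas : Measurable (S n) := by
    have hSeq : S n = fun ω => (((b:ℝ)*lam)^n)⁻¹ * ∑ x : Fin n → Fin b, ν (ξ n x ω) :=
      funext fun ω => hS n ω
    rw [hSeq]
    apply Measurable.const_mul
    apply Finset.measurable_sum
    intro x _
    exact (measurable_from_top (f := ν)).comp (hmeas n x)
  -- probability
  have hμs := measure_root ξ μ M pi hmarkov i
  have hμ'univ : μ' Set.univ = 1 := by
    rw [hμ'def, ProbabilityTheory.cond, Measure.smul_apply, smul_eq_mul,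
      Measure.restrict_apply_univ, hμs,
      ENNReal.inv_mul_cancel (ENNReal.ofReal_pos.2 (hpipos i)).ne' ENNReal.ofReal_ne_top]
  -- pointwise estimate
  set g : ℕ → Ω → ℝ≥0∞ := fun m ω =>
    ENNReal.ofReal (Real.exp (-(m:ℝ)^2/(4*z)))
      * (ENNReal.ofReal (Real.exp ((m:ℝ) * S n ω))
        + ENNReal.ofReal (Real.exp (-(m:ℝ) * S n ω))) with hgdef
  have hpt : ∀ ω, ENNReal.ofReal (Real.exp (ζ * (S n ω)^2))
      ≤ 1 + ENNReal.ofReal (Real.exp q) * ∑' m : ℕ, g m ω := by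
    intro ω
    set sv := S n ω with hsv
    have A1 : Real.exp (ζ * sv^2) ≤ 1 + Real.exp (z * sv^2) := by
      rcases le_or_gt ζ 0 with h0 | h0
      · have : Real.exp (ζ * sv^2) ≤ 1 :=
          Real.exp_le_one_iff.2 (mul_nonpos_of_nonpos_of_nonneg h0 (sq_nonneg _))
        linarith [Real.exp_pos (z * sv^2)]
      · have hle : ζ * sv^2 ≤ z * sv^2 :=
          mul_le_mul_of_nonneg_right hζ.2.le (sq_nonneg _)
        have := Real.exp_le_exp.2 hle
        linarith
    obtain ⟨m₀, hm₀⟩ := quad_grid z hz sv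
    have A2 : Real.exp (z * sv^2) ≤ Real.exp q *
        (Real.exp (-(m₀:ℝ)^2/(4*z)) * (Real.exp ((m₀:ℝ)*sv) + Real.exp (-(m₀:ℝ)*sv))) := by
      have e1 : Real.exp (z*sv^2) ≤ Real.exp (q + (-(m₀:ℝ)^2/(4*z)) + (m₀:ℝ)*|sv|) := by
        apply Real.exp_le_exp.2
        rw [hqdef]
        have : 1/(16*z) + (-(m₀:ℝ)^2/(4*z)) + (m₀:ℝ)*|sv|
            = 1/(16*z) - (m₀:ℝ)^2/(4*z) + (m₀:ℝ)*|sv| := by ring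
        rw [this]
        exact hm₀
      rw [Real.exp_add, Real.exp_add] at e1
      have e2 : Real.exp ((m₀:ℝ)*|sv|) ≤ Real.exp ((m₀:ℝ)*sv) + Real.exp (-(m₀:ℝ)*sv) := by
        rcases abs_cases sv with ⟨ha, _⟩ | ⟨ha, _⟩
        · rw [ha]
          linarith [Real.exp_pos (-(m₀:ℝ)*sv)]
        · rw [ha]
          have : (m₀:ℝ) * -sv = -(m₀:ℝ) * sv := by ring
          rw [this]
          linarith [Real.exp_pos ((m₀:ℝ)*sv)]
      calc Real.exp (z*sv^2)
          ≤ Real.exp q * Real.exp (-(m₀:ℝ)^2/(4*z)) * Real.exp ((m₀:ℝ)*|sv|) := e1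
        _ ≤ Real.exp q * Real.exp (-(m₀:ℝ)^2/(4*z))
            * (Real.exp ((m₀:ℝ)*sv) + Real.exp (-(m₀:ℝ)*sv)) := by
            apply mul_le_mul_of_nonneg_left e2 (by positivity)
        _ = Real.exp q * (Real.exp (-(m₀:ℝ)^2/(4*z))
            * (Real.exp ((m₀:ℝ)*sv) + Real.exp (-(m₀:ℝ)*sv))) := by ring
    calc ENNReal.ofReal (Real.exp (ζ * sv^2))
        ≤ ENNReal.ofReal (1 + Real.exp (z * sv^2)) := ENNReal.ofReal_le_ofReal A1
      _ = 1 + ENNReal.ofReal (Real.exp (z * sv^2)) := by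
          rw [ENNReal.ofReal_add (by norm_num) (Real.exp_nonneg _), ENNReal.ofReal_one]
      _ ≤ 1 + ENNReal.ofReal (Real.exp q) * ∑' m : ℕ, g m ω := by
          apply add_le_add_right
          calc ENNReal.ofReal (Real.exp (z * sv^2))
              ≤ ENNReal.ofReal (Real.exp q *
                (Real.exp (-(m₀:ℝ)^2/(4*z)) * (Real.exp ((m₀:ℝ)*sv) + Real.exp (-(m₀:ℝ)*sv)))) :=
                ENNReal.ofReal_le_ofReal A2
            _ = ENNReal.ofReal (Real.exp q) * g m₀ ω := by
                rw [ENNReal.ofReal_mul (Real.exp_nonneg _), hgdef]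
                congr 1
                rw [ENNReal.ofReal_mul (Real.exp_nonneg _),
                  ENNReal.ofReal_add (Real.exp_nonneg _) (Real.exp_nonneg _)]
            _ ≤ ENNReal.ofReal (Real.exp q) * ∑' m : ℕ, g m ω :=
                mul_le_mul_right (ENNReal.le_tsum m₀) _
  -- measurability of g m
  have hgmeas : ∀ m : ℕ, Measurable (g m) := by
    intro m
    apply Measurable.const_mul
    apply Measurable.add (f := fun x => ENNReal.ofReal (Real.exp ((m:ℝ) * S n x))) (g := fun x => ENNReal.ofReal (Real.exp (-(m:ℝ) * S n x)))
    · exact (Real.measurable_exp.comp (hSmeas.const_mul _)).ennreal_ofReal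
    · exact (Real.measurable_exp.comp (hSmeas.const_mul _)).ennreal_ofReal
  -- per-m integral bound
  have hgint : ∀ m : ℕ, ∫⁻ ω, g m ω ∂μ' ≤ 2 * (2⁻¹ : ℝ≥0∞)^m := by
    intro m
    have h1 : ∫⁻ ω, g m ω ∂μ'
        = ENNReal.ofReal (Real.exp (-(m:ℝ)^2/(4*z)))
          * ∫⁻ ω, (ENNReal.ofReal (Real.exp ((m:ℝ) * S n ω))
            + ENNReal.ofReal (Real.exp (-(m:ℝ) * S n ω))) ∂μ' := by
      rw [hgdef]
      exact lintegral_const_mul' _ _ ENNReal.ofReal_ne_top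
    have hm1 : Measurable (fun ω => ENNReal.ofReal (Real.exp ((m:ℝ) * S n ω))) :=
      ((hSmeas.const_mul _).exp).ennreal_ofReal
    rw [h1, lintegral_add_left hm1]
    have h2 : (∫⁻ ω, ENNReal.ofReal (Real.exp ((m:ℝ) * S n ω)) ∂μ')
        + (∫⁻ ω, ENNReal.ofReal (Real.exp (-(m:ℝ) * S n ω)) ∂μ')
        ≤ 2 * ENNReal.ofReal (Real.exp (V*(m:ℝ) + c*(m:ℝ)^2)) := by
      rw [two_mul]
      exact add_le_add (MGFp m) (MGFm m)
    calc ENNReal.ofReal (Real.exp (-(m:ℝ)^2/(4*z))) * _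
        ≤ ENNReal.ofReal (Real.exp (-(m:ℝ)^2/(4*z)))
          * (2 * ENNReal.ofReal (Real.exp (V*(m:ℝ) + c*(m:ℝ)^2))) := mul_le_mul_right h2 _
      _ = 2 * ENNReal.ofReal (Real.exp (-(m:ℝ)^2/(4*z)) * Real.exp (V*(m:ℝ) + c*(m:ℝ)^2)) := by
          rw [ENNReal.ofReal_mul (Real.exp_nonneg _)]
          ring
      _ = 2 * ENNReal.ofReal (Real.exp (V*(m:ℝ) + c*(m:ℝ)^2 + (-(m:ℝ)^2/(4*z)))) := by
          rw [← Real.exp_add]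
          ring_nf
      _ ≤ 2 * ENNReal.ofReal (Real.exp (-2*(m:ℝ))) := by
          apply mul_le_mul_right
          apply ENNReal.ofReal_le_ofReal
          apply Real.exp_le_exp.2
          have hmm : (m:ℝ) ≤ (m:ℝ)^2 := by
            have h := Nat.le_self_pow (n := 2) (by norm_num) m
            exact_mod_cast h
          have hzz : (m:ℝ)^2/(4*z) = (c+V+2)*(m:ℝ)^2 := by
            rw [hzdef]
            field_simp
          have hneg : -(m:ℝ)^2/(4*z) = -((c+V+2)*(m:ℝ)^2) := by
            rw [neg_div, hzz]
          rw [hneg]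
          nlinarith
      _ ≤ 2 * (2⁻¹ : ℝ≥0∞)^m := by
          apply mul_le_mul_right
          have he1 : Real.exp (-2*(m:ℝ)) = (Real.exp (-2))^m := by
            rw [← Real.exp_nat_mul]
            ring_nf
          have he2 : Real.exp (-2:ℝ) ≤ 1/2 := by
            rw [Real.exp_neg]
            have h3 : (2:ℝ) ≤ Real.exp 2 := by linarith [Real.add_one_le_exp (2:ℝ)]
            rw [show (1:ℝ)/2 = 2⁻¹ by norm_num]
            exact inv_anti₀ (by norm_num) h3
          calc ENNReal.ofReal (Real.exp (-2*(m:ℝ)))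
              = ENNReal.ofReal ((Real.exp (-2))^m) := by rw [he1]
            _ ≤ ENNReal.ofReal ((1/2:ℝ)^m) :=
                ENNReal.ofReal_le_ofReal (pow_le_pow_left₀ (Real.exp_nonneg _) he2 m)
            _ = (ENNReal.ofReal (1/2:ℝ))^m := ENNReal.ofReal_pow (by norm_num) m
            _ = (2⁻¹ : ℝ≥0∞)^m := by
                congr 1
                rw [show (1:ℝ)/2 = 2⁻¹ by norm_num,
                  ENNReal.ofReal_inv_of_pos (by norm_num : (0:ℝ) < 2)]
                norm_num
  -- put everything together
  calc ∫⁻ ω, ENNReal.ofReal (Real.exp (ζ * (S n ω)^2)) ∂μ'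
      ≤ ∫⁻ ω, (1 + ENNReal.ofReal (Real.exp q) * ∑' m : ℕ, g m ω) ∂μ' := lintegral_mono hpt
    _ = (∫⁻ _, (1:ℝ≥0∞) ∂μ') + ∫⁻ ω, ENNReal.ofReal (Real.exp q) * ∑' m : ℕ, g m ω ∂μ' :=
        lintegral_add_left measurable_const _
    _ = 1 + ENNReal.ofReal (Real.exp q) * ∫⁻ ω, ∑' m : ℕ, g m ω ∂μ' := by
        rw [lintegral_one, hμ'univ, lintegral_const_mul' _ _ ENNReal.ofReal_ne_top]
    _ = 1 + ENNReal.ofReal (Real.exp q) * ∑' m : ℕ, ∫⁻ ω, g m ω ∂μ' := by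
        rw [lintegral_tsum (fun m => (hgmeas m).aemeasurable)]
    _ ≤ 1 + ENNReal.ofReal (Real.exp q) * ∑' m : ℕ, 2 * (2⁻¹ : ℝ≥0∞)^m := by
        apply add_le_add_right
        exact mul_le_mul_right (ENNReal.tsum_le_tsum hgint) _
    _ = 1 + ENNReal.ofReal (Real.exp q) * 4 := by
        congr 1
        rw [ENNReal.tsum_mul_left, ENNReal.tsum_geometric, ENNReal.one_sub_inv_two, inv_inv]
        rw [show (2:ℝ≥0∞) * 2 = 4 by norm_num]
    _ = ENNReal.ofReal (1 + 4*Real.exp q) := by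
        rw [ENNReal.ofReal_add (by norm_num) (by positivity), ENNReal.ofReal_one,
          ENNReal.ofReal_mul (by norm_num), ENNReal.ofReal_ofNat]
        ring
end
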